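/- arXiv:1312.0068 — 8 statements merged into one kernel-verified Lean document; each statement's English description precedes it below -/
import Mathlib

section
/- Let n ∈ ℕ with n ≥ 1 and let t ∈ ℝ with 0 < t < 1 (take σ = √t), and define K(w,z) = (1/n)·Σ_{m=0}^{n−1} p_m(w)·p_m(z). Then for all w, z ∈ ℂ and for both choices of sign ε ∈ {+1, −1}: deriv_w K(w,z) + ε·deriv_z K(w,z) − ε·n·(1−ε·t)·(w+ε·z)·K(w,z) = −ε·√((1−ε·t)/(1+ε·t))·(p_n(w)·p_{n−1}(z) + ε·p_{n−1}(w)·p_n(z)), where deriv_w and deriv_z denote the complex derivatives of K in the first and second variables respectively. -/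
/-- The probabilists' Hermite polynomial evaluated at a complex argument. -/
noncomputable def hermiteC (m : ℕ) (z : ℂ) : ℂ :=
  Polynomial.aeval z (Polynomial.hermite m)

/-- The orthonormal polynomials for the Gaussian potential with real `t ∈ (0,1)`
and `σ = √t`:
`p_m(z) = He_m(z·√(n(1−t²))/√t)·(√t)^m·√((n/π)·√(1−t²))/√(m!)`. -/
noncomputable def opolyR (n : ℕ) (t : ℝ) (m : ℕ) (z : ℂ) : ℂ :=
  hermiteC m (z * (Real.sqrt ((n : ℝ) * (1 - t ^ 2)) : ℂ) / (Real.sqrt t : ℂ)) *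
    (Real.sqrt t : ℂ) ^ m *
    (Real.sqrt (((n : ℝ) / Real.pi) * Real.sqrt (1 - t ^ 2)) : ℂ) /
    (Real.sqrt (Nat.factorial m) : ℂ)

/-- The (unnormalized, non-conjugated) kernel
`K(w,z) = (1/n)·Σ_{m=0}^{n−1} p_m(w)·p_m(z)`. -/
noncomputable def kerK (n : ℕ) (t : ℝ) (w z : ℂ) : ℂ :=
  (1 / (n : ℂ)) * ∑ m ∈ Finset.range n, opolyR n t m w * opolyR n t m z

open Polynomial in
lemma hermite_deriv (m : ℕ) :
    Polynomial.derivative (Polynomial.hermite m) = (m : Polynomial ℤ) * Polynomial.hermite (m - 1) := by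
  induction m using Nat.strong_induction_on with
  | _ m ih =>
    match m with
    | 0 => simp [hermite_zero]
    | 1 => simp [hermite_one, hermite_zero]
    | (k+2) =>
      have h1 := ih (k+1) (by omega)
      have h0 := ih k (by omega)
      simp only [Nat.add_sub_cancel] at h1
      rw [show k+2-1 = k+1 from rfl]
      rw [hermite_succ (k+1), derivative_sub, derivative_mul, derivative_X, h1,
        derivative_mul, derivative_natCast, h0]
      rw [hermite_succ k, h0]
      push_cast
      ring

lemma hermiteC_hasDerivAt (m : ℕ) (u : ℂ) :
    HasDerivAt (hermiteC m) ((m : ℂ) * hermiteC (m - 1) u) u := by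
  have h := (Polynomial.hermite m).hasDerivAt_aeval (𝕜 := ℂ) u
  rw [hermite_deriv] at h
  show HasDerivAt (fun x => Polynomial.aeval x (Polynomial.hermite m)) _ u
  simpa [hermiteC] using h

lemma hermiteC_succ (m : ℕ) (u : ℂ) :
    hermiteC (m + 1) u = u * hermiteC m u - (m : ℂ) * hermiteC (m - 1) u := by
  unfold hermiteC
  rw [Polynomial.hermite_succ, map_sub, map_mul, Polynomial.aeval_X, hermite_deriv]
  simp

lemma sqrt_fac_succ (m : ℕ) :
    Real.sqrt (Nat.factorial (m + 1)) = Real.sqrt (m + 1) * Real.sqrt (Nat.factorial m) := by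
  rw [Nat.factorial_succ]
  push_cast
  rw [Real.sqrt_mul (by positivity)]

lemma sqrt_fac_ne (m : ℕ) : (Real.sqrt (Nat.factorial m) : ℂ) ≠ 0 := by
  have : (0:ℝ) < Real.sqrt (Nat.factorial m) :=
    Real.sqrt_pos.mpr (by exact_mod_cast Nat.factorial_pos m)
  simp only [ne_eq, Complex.ofReal_eq_zero]
  exact this.ne'

lemma sqrt_nat_ne (k : ℕ) : (Real.sqrt ((k : ℝ) + 1) : ℂ) ≠ 0 := by
  simp only [ne_eq, Complex.ofReal_eq_zero]
  exact (Real.sqrt_pos.mpr (by positivity)).ne'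

lemma alg1 (k : ℕ) (A S C F s H : ℂ) (hS : S ≠ 0) (hF : F ≠ 0) (hs : s ≠ 0) :
    A * s * (H * S ^ k * C / F) = s * s * H * (A / S) * S ^ (k + 1) * C / (s * F) := by
  rw [pow_succ]
  field_simp

lemma opolyR_hasDerivAt (n : ℕ) (t : ℝ) (ht0 : 0 < t) (m : ℕ) (z : ℂ) :
    HasDerivAt (opolyR n t m)
      ((Real.sqrt ((n : ℝ) * (1 - t ^ 2)) : ℂ) * (Real.sqrt m : ℂ) * opolyR n t (m - 1) z) z := by
  set α : ℂ := (Real.sqrt ((n : ℝ) * (1 - t ^ 2)) : ℂ) with hα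
  set σ : ℂ := (Real.sqrt t : ℂ) with hσdef
  have hσ : σ ≠ 0 := by
    rw [hσdef]
    simp only [ne_eq, Complex.ofReal_eq_zero]
    exact (Real.sqrt_pos.mpr ht0).ne'
  set c : ℂ := (Real.sqrt (((n : ℝ) / Real.pi) * Real.sqrt (1 - t ^ 2)) : ℂ) with hc
  have hg : HasDerivAt (fun z : ℂ => z * α / σ) (α / σ) z := by
    simpa using ((hasDerivAt_id z).mul_const α).div_const σ
  have hH : HasDerivAt (fun z : ℂ => hermiteC m (z * α / σ))
      ((m : ℂ) * hermiteC (m - 1) (z * α / σ) * (α / σ)) z :=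
    (hermiteC_hasDerivAt m (z * α / σ)).comp (h := fun z : ℂ => z * α / σ) z hg
  have h : HasDerivAt (opolyR n t m)
      ((m : ℂ) * hermiteC (m - 1) (z * α / σ) * (α / σ) * σ ^ m * c /
        (Real.sqrt (Nat.factorial m) : ℂ)) z :=
    ((hH.mul_const (σ ^ m)).mul_const c).div_const _
  convert h using 1
  cases m with
  | zero => simp
  | succ k =>
    unfold opolyR
    simp only [Nat.add_sub_cancel, Nat.cast_add, Nat.cast_one]
    rw [sqrt_fac_succ k, Complex.ofReal_mul]
    have h1 : ((k : ℂ) + 1) = (Real.sqrt ((k : ℝ) + 1) : ℂ) * (Real.sqrt ((k : ℝ) + 1) : ℂ) := by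
      rw [← Complex.ofReal_mul, Real.mul_self_sqrt (by positivity)]
      push_cast; ring
    rw [h1]
    exact alg1 k α σ c _ _ _ hσ (sqrt_fac_ne k) (sqrt_nat_ne k)

lemma alg2 (k : ℕ) (U S C Fk s1 s2 H1 H0 : ℂ) (hS : S ≠ 0) (hF : Fk ≠ 0) (hs1 : s1 ≠ 0)
    (hs2 : s2 ≠ 0) :
    S * U * (H1 * S ^ (k + 1) * C / (s1 * Fk))
      = s2 * ((U * H1 - s1 * s1 * H0) * S ^ (k + 1 + 1) * C / (s2 * (s1 * Fk)))
        + S * S * s1 * (H0 * S ^ k * C / Fk) := by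
  rw [pow_succ, pow_succ]
  field_simp
  ring

lemma opolyR_rec (n : ℕ) (t : ℝ) (ht0 : 0 < t) (m : ℕ) (z : ℂ) :
    (Real.sqrt ((n : ℝ) * (1 - t ^ 2)) : ℂ) * z * opolyR n t m z
      = (Real.sqrt ((m : ℝ) + 1) : ℂ) * opolyR n t (m + 1) z
        + (t : ℂ) * (Real.sqrt (m : ℝ) : ℂ) * opolyR n t (m - 1) z := by
  set α : ℂ := (Real.sqrt ((n : ℝ) * (1 - t ^ 2)) : ℂ) with hα
  set σ : ℂ := (Real.sqrt t : ℂ) with hσdef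
  have hσ : σ ≠ 0 := by
    rw [hσdef]
    simp only [ne_eq, Complex.ofReal_eq_zero]
    exact (Real.sqrt_pos.mpr ht0).ne'
  have hσ2 : σ * σ = (t : ℂ) := by
    rw [hσdef, ← Complex.ofReal_mul, Real.mul_self_sqrt ht0.le]
  have hu : α * z = σ * (z * α / σ) := by
    rw [mul_comm σ, div_mul_cancel₀ _ hσ, mul_comm]
  cases m with
  | zero =>
    unfold opolyR
    simp [hermiteC, Polynomial.hermite_zero, Polynomial.hermite_one]
    left
    rw [div_mul_cancel₀ _ hσ, hα,
      show Real.sqrt ((n : ℝ) * (1 - t ^ 2)) = Real.sqrt (n : ℝ) * Real.sqrt (1 - t ^ 2) from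
        Real.sqrt_mul (by positivity) _]
    push_cast
    ring
  | succ k =>
    unfold opolyR
    rw [hermiteC_succ (k + 1)]
    rw [sqrt_fac_succ (k + 1), sqrt_fac_succ k]
    simp only [Nat.add_sub_cancel, Nat.cast_add, Nat.cast_one, Complex.ofReal_mul]
    have h1 : ((k : ℂ) + 1) = (Real.sqrt ((k : ℝ) + 1) : ℂ) * (Real.sqrt ((k : ℝ) + 1) : ℂ) := by
      rw [← Complex.ofReal_mul, Real.mul_self_sqrt (by positivity)]
      push_cast; ring
    rw [h1, hu, ← hσ2]
    exact alg2 k (z * α / σ) σ _ _ _ _ _ _ hσ (sqrt_fac_ne k) (sqrt_nat_ne k)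
      (by simpa using sqrt_nat_ne (k + 1))

/-- the Christoffel–Darboux type identities for `K`: for both signs
`ε = ±1` and all `w, z ∈ ℂ`,
`∂_w K + ε·∂_z K − ε·n·(1−ε·t)·(w+ε·z)·K = −ε·√((1−ε·t)/(1+ε·t))·(p_n(w)p_{n−1}(z) + ε·p_{n−1}(w)p_n(z))`. -/
theorem stmt4 (n : ℕ) (hn : 1 ≤ n) (t : ℝ) (ht0 : 0 < t) (ht1 : t < 1)
    (ε : ℝ) (hε : ε = 1 ∨ ε = -1) (w z : ℂ) :
    deriv (fun w' => kerK n t w' z) w + (ε : ℂ) * deriv (fun z' => kerK n t w z') z -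
        (ε : ℂ) * (n : ℂ) * (1 - (ε : ℂ) * (t : ℂ)) * (w + (ε : ℂ) * z) * kerK n t w z =
      -(ε : ℂ) * (Real.sqrt ((1 - ε * t) / (1 + ε * t)) : ℂ) *
        (opolyR n t n w * opolyR n t (n - 1) z +
          (ε : ℂ) * opolyR n t (n - 1) w * opolyR n t n z) := by
  have hn0 : (n : ℂ) ≠ 0 := Nat.cast_ne_zero.mpr (by omega)
  have ht2 : (0 : ℝ) < 1 - t ^ 2 := by nlinarith
  set a : ℂ := (Real.sqrt ((n : ℝ) * (1 - t ^ 2)) : ℂ) with ha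
  have ha0 : a ≠ 0 := by
    rw [ha]
    simp only [ne_eq, Complex.ofReal_eq_zero]
    exact (Real.sqrt_pos.mpr (by positivity)).ne'
  have ha2 : a ^ 2 = (n : ℂ) * (1 - (t : ℂ) ^ 2) := by
    rw [ha, ← Complex.ofReal_pow, Real.sq_sqrt (by positivity)]
    push_cast
    ring
  simp only [kerK]
  set S1 : ℂ := ∑ m ∈ Finset.range n,
    (Real.sqrt (m : ℝ) : ℂ) * (opolyR n t (m - 1) w * opolyR n t m z) with hS1
  set S2 : ℂ := ∑ m ∈ Finset.range n,
    (Real.sqrt (m : ℝ) : ℂ) * (opolyR n t (m - 1) z * opolyR n t m w) with hS2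
  set T1 : ℂ := ∑ m ∈ Finset.range n,
    (Real.sqrt ((m : ℝ) + 1) : ℂ) * (opolyR n t (m + 1) w * opolyR n t m z) with hT1
  set T2 : ℂ := ∑ m ∈ Finset.range n,
    (Real.sqrt ((m : ℝ) + 1) : ℂ) * (opolyR n t (m + 1) z * opolyR n t m w) with hT2
  set U : ℂ := ∑ m ∈ Finset.range n, opolyR n t m w * opolyR n t m z with hU0
  -- derivative in w
  have hDw : HasDerivAt (fun w' => 1 / (n : ℂ) * ∑ m ∈ Finset.range n,
      opolyR n t m w' * opolyR n t m z)
      (1 / (n : ℂ) * ∑ m ∈ Finset.range n,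
        (Real.sqrt ((n : ℝ) * (1 - t ^ 2)) : ℂ) * (Real.sqrt (m : ℝ) : ℂ) *
          opolyR n t (m - 1) w * opolyR n t m z) w :=
    (HasDerivAt.fun_sum fun m _ =>
      (opolyR_hasDerivAt n t ht0 m w).mul_const (opolyR n t m z)).const_mul _
  have hderivw : deriv (fun w' => 1 / (n : ℂ) * ∑ m ∈ Finset.range n,
      opolyR n t m w' * opolyR n t m z) w = 1 / (n : ℂ) * (a * S1) := by
    rw [hDw.deriv, hS1, ha]
    congr 1
    rw [Finset.mul_sum]
    exact Finset.sum_congr rfl fun m _ => by ring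
  have hDz : HasDerivAt (fun z' => 1 / (n : ℂ) * ∑ m ∈ Finset.range n,
      opolyR n t m w * opolyR n t m z')
      (1 / (n : ℂ) * ∑ m ∈ Finset.range n,
        opolyR n t m w * ((Real.sqrt ((n : ℝ) * (1 - t ^ 2)) : ℂ) * (Real.sqrt (m : ℝ) : ℂ) *
          opolyR n t (m - 1) z)) z :=
    (HasDerivAt.fun_sum fun m _ =>
      (opolyR_hasDerivAt n t ht0 m z).const_mul (opolyR n t m w)).const_mul _
  have hderivz : deriv (fun z' => 1 / (n : ℂ) * ∑ m ∈ Finset.range n,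
      opolyR n t m w * opolyR n t m z') z = 1 / (n : ℂ) * (a * S2) := by
    rw [hDz.deriv, hS2, ha]
    congr 1
    rw [Finset.mul_sum]
    exact Finset.sum_congr rfl fun m _ => by ring
  rw [hderivw, hderivz]
  -- recurrence, summed
  have hrec : ∀ m ∈ Finset.range n,
      a * ((w + (ε : ℂ) * z) * (opolyR n t m w * opolyR n t m z)) =
        (Real.sqrt ((m : ℝ) + 1) : ℂ) * (opolyR n t (m + 1) w * opolyR n t m z)
        + (t : ℂ) * ((Real.sqrt (m : ℝ) : ℂ) * (opolyR n t (m - 1) w * opolyR n t m z))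
        + (ε : ℂ) * ((Real.sqrt ((m : ℝ) + 1) : ℂ) * (opolyR n t (m + 1) z * opolyR n t m w))
        + (ε : ℂ) * ((t : ℂ) * ((Real.sqrt (m : ℝ) : ℂ) *
            (opolyR n t (m - 1) z * opolyR n t m w))) := by
    intro m _
    have hw := opolyR_rec n t ht0 m w
    have hz := opolyR_rec n t ht0 m z
    rw [← ha] at hw hz
    linear_combination opolyR n t m z * hw + (ε : ℂ) * opolyR n t m w * hz
  have hUeq : a * ((w + (ε : ℂ) * z) * U) =
      T1 + (t : ℂ) * S1 + (ε : ℂ) * T2 + (ε : ℂ) * ((t : ℂ) * S2) := by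
    rw [hU0, Finset.mul_sum, Finset.mul_sum, Finset.sum_congr rfl hrec,
      hS1, hS2, hT1, hT2]
    simp only [Finset.sum_add_distrib, Finset.mul_sum]
  -- telescoping
  have htel1 : T1 = S2 + (Real.sqrt (n : ℝ) : ℂ) *
      (opolyR n t n w * opolyR n t (n - 1) z) := by
    have key := Finset.sum_range_sub
      (f := fun k => (Real.sqrt (k : ℝ) : ℂ) * (opolyR n t k w * opolyR n t (k - 1) z)) n
    rw [Finset.sum_sub_distrib] at key
    simp only [Nat.add_sub_cancel] at key
    have e1 : ∑ m ∈ Finset.range n, (Real.sqrt ((m + 1 : ℕ) : ℝ) : ℂ) *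
        (opolyR n t (m + 1) w * opolyR n t m z) = T1 := by
      rw [hT1]
      refine Finset.sum_congr rfl fun m _ => ?_
      push_cast
      ring
    have e2 : ∑ m ∈ Finset.range n, (Real.sqrt (m : ℝ) : ℂ) *
        (opolyR n t m w * opolyR n t (m - 1) z) = S2 := by
      rw [hS2]
      exact Finset.sum_congr rfl fun m _ => by ring
    have e3 : (Real.sqrt ((0 : ℕ) : ℝ) : ℂ) * (opolyR n t 0 w * opolyR n t (0 - 1) z) = 0 := by
      simp
    linear_combination key - e1 + e2 - e3
  have htel2 : T2 = S1 + (Real.sqrt (n : ℝ) : ℂ) *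
      (opolyR n t n z * opolyR n t (n - 1) w) := by
    have key := Finset.sum_range_sub
      (f := fun k => (Real.sqrt (k : ℝ) : ℂ) * (opolyR n t k z * opolyR n t (k - 1) w)) n
    rw [Finset.sum_sub_distrib] at key
    simp only [Nat.add_sub_cancel] at key
    have e1 : ∑ m ∈ Finset.range n, (Real.sqrt ((m + 1 : ℕ) : ℝ) : ℂ) *
        (opolyR n t (m + 1) z * opolyR n t m w) = T2 := by
      rw [hT2]
      refine Finset.sum_congr rfl fun m _ => ?_
      push_cast
      ring
    have e2 : ∑ m ∈ Finset.range n, (Real.sqrt (m : ℝ) : ℂ) *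
        (opolyR n t m z * opolyR n t (m - 1) w) = S1 := by
      rw [hS1]
      exact Finset.sum_congr rfl fun m _ => by ring
    have e3 : (Real.sqrt ((0 : ℕ) : ℝ) : ℂ) * (opolyR n t 0 z * opolyR n t (0 - 1) w) = 0 := by
      simp
    linear_combination key - e1 + e2 - e3
  have hn1 : (n : ℂ) * (1 / (n : ℂ)) = 1 := by field_simp
  refine mul_left_cancel₀ (a := (n : ℂ) * a) (mul_ne_zero hn0 ha0) ?_
  rcases hε with h | h <;> subst h
  · have h1t : (0 : ℝ) < 1 - t := by linarith
    have h2t : (0 : ℝ) < 1 + t := by linarith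
    simp only [Complex.ofReal_one, one_mul] at hUeq ⊢
    have hkeyR : Real.sqrt ((n : ℝ) * (1 - t ^ 2)) * Real.sqrt ((1 - t) / (1 + t)) =
        Real.sqrt (n : ℝ) * (1 - t) := by
      rw [← Real.sqrt_mul (by positivity),
        show (n : ℝ) * (1 - t ^ 2) * ((1 - t) / (1 + t)) = (n : ℝ) * (1 - t) ^ 2 from by
          field_simp; ring,
        Real.sqrt_mul (by positivity), Real.sqrt_sq (by linarith)]
    have hkeyC : a * (Real.sqrt ((1 - t) / (1 + t)) : ℂ) =
        (1 - (t : ℂ)) * (Real.sqrt (n : ℝ) : ℂ) := by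
      rw [ha, ← Complex.ofReal_mul, hkeyR]
      push_cast
      ring
    linear_combination (S1 + S2) * ha2 +
      (a ^ 2 * S1 + a ^ 2 * S2 - (n : ℂ) * (1 - (t : ℂ)) * (w + z) * U * a) * hn1 -
      (n : ℂ) * (1 - (t : ℂ)) * hUeq - (n : ℂ) * (1 - (t : ℂ)) * htel1 -
      (n : ℂ) * (1 - (t : ℂ)) * htel2 +
      ((n : ℂ) * (opolyR n t n w * opolyR n t (n - 1) z) +
        (n : ℂ) * (opolyR n t (n - 1) w * opolyR n t n z)) * hkeyC
  · have h1t : (0 : ℝ) < 1 - t := by linarith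
    have h2t : (0 : ℝ) < 1 + t := by linarith
    simp only [Complex.ofReal_neg, Complex.ofReal_one, neg_mul, one_mul, sub_neg_eq_add,
      ← sub_eq_add_neg] at hUeq ⊢
    have hkeyR : Real.sqrt ((n : ℝ) * (1 - t ^ 2)) * Real.sqrt ((1 + t) / (1 - t)) =
        Real.sqrt (n : ℝ) * (1 + t) := by
      rw [← Real.sqrt_mul (by positivity),
        show (n : ℝ) * (1 - t ^ 2) * ((1 + t) / (1 - t)) = (n : ℝ) * (1 + t) ^ 2 from by
          field_simp; ring,
        Real.sqrt_mul (by positivity), Real.sqrt_sq (by linarith)]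
    have hkeyC : a * (Real.sqrt ((1 + t) / (1 - t)) : ℂ) =
        (1 + (t : ℂ)) * (Real.sqrt (n : ℝ) : ℂ) := by
      rw [ha, ← Complex.ofReal_mul, hkeyR]
      push_cast
      ring
    linear_combination (S1 - S2) * ha2 +
      (a ^ 2 * S1 - a ^ 2 * S2 + (n : ℂ) * (1 + (t : ℂ)) * (w - z) * U * a) * hn1 +
      (n : ℂ) * (1 + (t : ℂ)) * hUeq + (n : ℂ) * (1 + (t : ℂ)) * htel1 -
      (n : ℂ) * (1 + (t : ℂ)) * htel2 +
      (-(n : ℂ) * (opolyR n t n w * opolyR n t (n - 1) z) +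
        (n : ℂ) * (opolyR n t (n - 1) w * opolyR n t n z)) * hkeyC
end

section
/- Let F ∈ ℝ with F > 0, let b ∈ ℝ with b > 0, set a = √(b² + F²), and let φ ∈ (−π, π]. Then the point z = a·cos φ + i·b·sin φ lies in ℂ ∖ [−F,F], and U_F(z) = ((a−b)/F)·(cos φ − i·sin φ); in particular Re(U_F(z)) = ((a−b)/F)·cos φ, Im(U_F(z)) = −((a−b)/F)·sin φ, and |U_F(z)| = (a−b)/F > 0. -/
open scoped Classical

/-- The real segment `[−F, F]` viewed as a subset of `ℂ`. -/
def segC (F : ℝ) : Set ℂ := {z : ℂ | z.im = 0 ∧ -F ≤ z.re ∧ z.re ≤ F}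

/-- `ℂ⁺`: the open right half-plane together with the nonnegative imaginary axis. -/
def Cplus : Set ℂ := {z : ℂ | 0 < z.re ∨ (z.re = 0 ∧ 0 ≤ z.im)}

/-- `U_F(z) = (z ∓ √(z²−F²))/F`, with `−` on `ℂ⁺` and `+` off `ℂ⁺`
(principal branch of the square root). -/
noncomputable def funU (F : ℝ) (z : ℂ) : ℂ :=
  if z ∈ Cplus then (z - (z ^ 2 - (F : ℂ) ^ 2) ^ ((1 : ℂ) / 2)) / F
  else (z + (z ^ 2 - (F : ℂ) ^ 2) ^ ((1 : ℂ) / 2)) / F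

/-- `T_F(z) = ±√(z²−F²)`, with `+` on `ℂ⁺` and `−` off `ℂ⁺`. -/
noncomputable def funT (F : ℝ) (z : ℂ) : ℂ :=
  if z ∈ Cplus then (z ^ 2 - (F : ℂ) ^ 2) ^ ((1 : ℂ) / 2)
  else -((z ^ 2 - (F : ℂ) ^ 2) ^ ((1 : ℂ) / 2))

/-- `W_F(z) = ((z+F)/(z−F))^{1/4} + ((z−F)/(z+F))^{1/4}` (principal fourth roots). -/
noncomputable def funW (F : ℝ) (z : ℂ) : ℂ :=
  ((z + F) / (z - F)) ^ ((1 : ℂ) / 4) + ((z - F) / (z + F)) ^ ((1 : ℂ) / 4)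

lemma cpow_half_mem (w : ℂ) :
    0 < (w ^ ((1:ℂ)/2)).re ∨ ((w ^ ((1:ℂ)/2)).re = 0 ∧ 0 ≤ (w ^ ((1:ℂ)/2)).im) := by
  by_cases hw : w = 0
  · right
    simp [hw, Complex.zero_cpow (by norm_num : (1:ℂ)/2 ≠ 0)]
  rw [Complex.cpow_def_of_ne_zero hw]
  rw [Complex.exp_re, Complex.exp_im]
  have him : (Complex.log w * (1/2)).im = w.arg / 2 := by
    simp [Complex.log_im, Complex.mul_im]
    ring
  rw [him]
  have h1 : -(Real.pi/2) < w.arg / 2 := by linarith [Complex.neg_pi_lt_arg w]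
  have h2 : w.arg / 2 ≤ Real.pi/2 := by linarith [Complex.arg_le_pi w]
  rcases lt_or_eq_of_le h2 with h2' | h2'
  · left
    have : 0 < Real.cos (w.arg / 2) := Real.cos_pos_of_mem_Ioo ⟨h1, h2'⟩
    positivity
  · right
    rw [h2']
    refine ⟨by simp [Real.cos_pi_div_two], ?_⟩
    simp [Real.sin_pi_div_two]
    positivity

lemma sq_cpow_half (s : ℂ) (hs : 0 < s.re ∨ (s.re = 0 ∧ 0 ≤ s.im)) :
    (s ^ 2) ^ ((1:ℂ)/2) = s := by
  set t := (s ^ 2) ^ ((1:ℂ)/2) with ht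
  have h2 : t ^ 2 = s ^ 2 := by
    have h := Complex.cpow_nat_inv_pow (s^2) (two_ne_zero)
    have h' : ((2:ℕ)⁻¹ : ℂ) = (1:ℂ)/2 := by norm_num
    rw [h'] at h
    exact h
  have hts : (t - s) * (t + s) = 0 := by linear_combination h2
  have hmem := cpow_half_mem (s^2)
  rw [← ht] at hmem
  rcases mul_eq_zero.1 hts with h | h
  · exact sub_eq_zero.1 h
  · have htneg : t = -s := eq_neg_of_add_eq_zero_left h
    have hre : t.re = -s.re := by rw [htneg]; simp
    have him' : t.im = -s.im := by rw [htneg]; simp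
    rcases hs with hp | ⟨hre0, him0⟩
    · rcases hmem with h' | ⟨h', _⟩ <;> linarith
    · have him0' : s.im = 0 := by
        rcases hmem with h' | ⟨_, h''⟩ <;> linarith
      have hs0 : s = 0 := Complex.ext hre0 him0'
      rw [htneg, hs0]; simp


/-- elliptic coordinates. For `F, b > 0`, `a = √(b²+F²)` and
`φ ∈ (−π, π]`, the point `z = a·cos φ + i·b·sin φ` lies in `ℂ ∖ [−F,F]` and
`U_F(z) = ((a−b)/F)·(cos φ − i·sin φ)`; in particular
`Re(U_F z) = ((a−b)/F)·cos φ`, `Im(U_F z) = −((a−b)/F)·sin φ`, and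
`|U_F z| = (a−b)/F > 0`. -/
theorem stmt6 (F b : ℝ) (hF : 0 < F) (hb : 0 < b) (a : ℝ)
    (ha : a = Real.sqrt (b ^ 2 + F ^ 2)) (φ : ℝ) (hφ : φ ∈ Set.Ioc (-Real.pi) Real.pi)
    (z : ℂ) (hz : z = (a * Real.cos φ : ℝ) + Complex.I * (b * Real.sin φ : ℝ)) :
    z ∉ segC F ∧
    funU F z = (((a - b) / F : ℝ) : ℂ) * ((Real.cos φ : ℝ) - Complex.I * (Real.sin φ : ℝ)) ∧
    (funU F z).re = ((a - b) / F) * Real.cos φ ∧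
    (funU F z).im = -(((a - b) / F) * Real.sin φ) ∧
    ‖funU F z‖ = (a - b) / F ∧
    0 < (a - b) / F := by
  have ha2 : a ^ 2 = b ^ 2 + F ^ 2 := by
    rw [ha]; exact Real.sq_sqrt (by positivity)
  have ha0 : 0 ≤ a := ha ▸ Real.sqrt_nonneg _
  have hba : b < a := by nlinarith
  have hFa : F < a := by nlinarith
  have trig := Real.sin_sq_add_cos_sq φ
  set s : ℂ := ((b * Real.cos φ : ℝ) : ℂ) + Complex.I * ((a * Real.sin φ : ℝ) : ℂ) with hs
  have hzre : z.re = a * Real.cos φ := by rw [hz]; simp [-Complex.ofReal_cos]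
  have hzim : z.im = b * Real.sin φ := by rw [hz]; simp [-Complex.ofReal_sin]
  have hsre : s.re = b * Real.cos φ := by rw [hs]; simp [-Complex.ofReal_cos]
  have hsim : s.im = a * Real.sin φ := by rw [hs]; simp [-Complex.ofReal_sin]
  have haC : (a:ℂ)^2 = (b:ℂ)^2 + (F:ℂ)^2 := by exact_mod_cast ha2
  have trigC : ((Real.sin φ : ℝ):ℂ)^2 + ((Real.cos φ : ℝ):ℂ)^2 = 1 := by exact_mod_cast trig
  have key : z ^ 2 - (F:ℂ) ^ 2 = s ^ 2 := by
    rw [hz, hs]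
    push_cast [-Complex.ofReal_cos, -Complex.ofReal_sin]
    linear_combination (((Real.cos φ:ℂ))^2 - Complex.I^2*((Real.sin φ:ℂ))^2) * haC -
      (F:ℂ)^2*((Real.sin φ:ℂ))^2*Complex.I_sq + (F:ℂ)^2*trigC
  have hU : funU F z = (z - s) / F := by
    unfold funU
    by_cases hzC : z ∈ Cplus
    · rw [if_pos hzC]
      have hsmem : 0 < s.re ∨ (s.re = 0 ∧ 0 ≤ s.im) := by
        rcases hzC with h | ⟨h1, h2⟩
        · left
          rw [hzre] at h
          rw [hsre]
          nlinarith
        · right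
          rw [hzre] at h1
          rw [hzim] at h2
          have hc : Real.cos φ = 0 := by
            rcases mul_eq_zero.1 h1 with h | h
            · linarith
            · exact h
          constructor
          · rw [hsre, hc]; ring
          · rw [hsim]
            have : 0 ≤ Real.sin φ := by nlinarith
            positivity
      rw [key, sq_cpow_half s hsmem]
    · rw [if_neg hzC]
      have hzC' : ¬(0 < z.re ∨ (z.re = 0 ∧ 0 ≤ z.im)) := hzC
      push_neg at hzC'
      obtain ⟨h1, h2⟩ := hzC'
      rw [hzre] at h1 h2
      rw [hzim] at h2
      have hsmem : 0 < (-s).re ∨ ((-s).re = 0 ∧ 0 ≤ (-s).im) := by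
        rcases lt_or_eq_of_le h1 with h | h
        · left
          simp only [Complex.neg_re, hsre]
          nlinarith
        · right
          have hc : Real.cos φ = 0 := by
            rcases mul_eq_zero.1 h with h' | h'
            · linarith
            · exact h'
          have hsn : Real.sin φ < 0 := by
            have := h2 h
            nlinarith
          constructor
          · simp only [Complex.neg_re, hsre, hc]; ring
          · simp only [Complex.neg_im, hsim]
            nlinarith
      have key' : z ^ 2 - (F:ℂ) ^ 2 = (-s) ^ 2 := by rw [key]; ring
      rw [key', sq_cpow_half (-s) hsmem]
      ring
  have hFne : (F:ℂ) ≠ 0 := by exact_mod_cast hF.ne'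
  have hUeq : funU F z =
      (((a - b) / F : ℝ) : ℂ) * ((Real.cos φ : ℝ) - Complex.I * (Real.sin φ : ℝ)) := by
    rw [hU, hz, hs]
    push_cast
    field_simp
    ring
  have hrpos : 0 < (a - b) / F := div_pos (by linarith) hF
  refine ⟨?_, hUeq, ?_, ?_, ?_, hrpos⟩
  · intro hmem
    obtain ⟨h1, h2, h3⟩ := hmem
    rw [hzim] at h1
    rw [hzre] at h2 h3
    have hsn : Real.sin φ = 0 := by
      rcases mul_eq_zero.1 h1 with h | h
      · linarith
      · exact h
    have hc2 : Real.cos φ ^ 2 = 1 := by nlinarith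
    have hx : (a * Real.cos φ) ^ 2 = a ^ 2 := by rw [mul_pow, hc2]; ring
    nlinarith [mul_nonneg (by linarith : (0:ℝ) ≤ F - a * Real.cos φ)
      (by linarith : (0:ℝ) ≤ F + a * Real.cos φ)]
  · rw [hUeq]
    simp only [Complex.mul_re, Complex.sub_re, Complex.sub_im, Complex.mul_im,
      Complex.ofReal_re, Complex.ofReal_im, Complex.I_re, Complex.I_im]
    ring
  · rw [hUeq]
    simp only [Complex.mul_re, Complex.sub_re, Complex.sub_im, Complex.mul_im,
      Complex.ofReal_re, Complex.ofReal_im, Complex.I_re, Complex.I_im]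
    ring
  · rw [hUeq, norm_mul, Complex.norm_real, Real.norm_eq_abs, abs_of_pos hrpos]
    have hns : Complex.normSq (((Real.cos φ : ℝ) : ℂ) - Complex.I * ((Real.sin φ : ℝ) : ℂ)) = 1 := by
      simp only [Complex.normSq_apply, Complex.sub_re, Complex.sub_im, Complex.ofReal_re,
        Complex.ofReal_im, Complex.mul_re, Complex.mul_im, Complex.I_re, Complex.I_im]
      linear_combination trig
    have h1 : ‖((Real.cos φ : ℝ) : ℂ) - Complex.I * ((Real.sin φ : ℝ) : ℂ)‖ = 1 := by
      rw [Complex.norm_def, hns, Real.sqrt_one]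
    rw [h1, mul_one]
end

section
/- Let F ∈ ℝ with F > 0. Then U_F maps ℂ ∖ [−F,F] bijectively onto the punctured open unit disc {u ∈ ℂ : 0 < |u| < 1}; that is, U_F is injective on ℂ ∖ [−F,F] and its image of ℂ ∖ [−F,F] equals (Metric.ball 0 1) ∖ {0}. -/
open scoped Classical

section Aux
open Complex
set_option maxHeartbeats 1000000

lemma sqrt_re_nonneg' (w : ℂ) : 0 ≤ (w ^ ((1:ℂ)/2)).re := by
  rcases eq_or_ne w 0 with h | h
  · simp [h, zero_cpow (by norm_num : (1:ℂ)/2 ≠ 0)]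
  · rw [cpow_def_of_ne_zero h, exp_re]
    have him : (Complex.log w * ((1:ℂ)/2)).im = w.arg / 2 := by
      simp [Complex.mul_im, Complex.log_im, Complex.log_re]; ring
    rw [him]
    apply mul_nonneg (Real.exp_pos _).le
    apply Real.cos_nonneg_of_mem_Icc
    constructor
    · linarith [Complex.neg_pi_lt_arg w, Real.pi_pos]
    · linarith [Complex.arg_le_pi w]

lemma sqrt_im_nonneg' (w : ℂ) (h0 : (w ^ ((1:ℂ)/2)).re = 0) :
    0 ≤ (w ^ ((1:ℂ)/2)).im := by
  rcases eq_or_ne w 0 with h | h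
  · simp [h, zero_cpow (by norm_num : (1:ℂ)/2 ≠ 0)]
  · rw [cpow_def_of_ne_zero h] at h0 ⊢
    rw [exp_re] at h0
    rw [exp_im]
    have him : (Complex.log w * ((1:ℂ)/2)).im = w.arg / 2 := by
      simp [Complex.mul_im, Complex.log_im, Complex.log_re]; ring
    rw [him] at h0 ⊢
    have hc : Real.cos (w.arg / 2) = 0 := by
      rcases mul_eq_zero.1 h0 with h | h
      · exact absurd h (Real.exp_pos _).ne'
      · exact h
    have heq : w.arg / 2 = Real.pi / 2 := by
      have h1 : -(Real.pi/2) < w.arg / 2 := by linarith [Complex.neg_pi_lt_arg w]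
      have h2 : w.arg / 2 ≤ Real.pi/2 := by linarith [Complex.arg_le_pi w]
      by_contra hne
      have := Real.cos_pos_of_mem_Ioo ⟨h1, lt_of_le_of_ne h2 hne⟩
      linarith
    rw [heq, Real.sin_pi_div_two]
    positivity

lemma main_lemma (F : ℝ) (hF : 0 < F) {z : ℂ} (hz : z ∉ segC F) :
    funU F z ≠ 0 ∧ ‖funU F z‖ < 1 ∧
      z = F * (funU F z + (funU F z)⁻¹) / 2 := by
  have hF0 : (F : ℂ) ≠ 0 := by exact_mod_cast hF.ne'
  set s : ℂ := (z ^ 2 - (F : ℂ) ^ 2) ^ ((1:ℂ)/2) with hs_def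
  have hseg : ¬ (z.im = 0 ∧ -F ≤ z.re ∧ z.re ≤ F) := hz
  have hzF : z ^ 2 - (F : ℂ) ^ 2 ≠ 0 := by
    intro h
    have h' : (z - F) * (z + F) = 0 := by linear_combination h
    rcases mul_eq_zero.1 h' with h1 | h1
    · apply hz
      have hzf : z = (F:ℂ) := by linear_combination h1
      rw [hzf]
      refine ⟨by simp, by simp; linarith, by simp⟩
    · apply hz
      have hzf : z = -(F:ℂ) := by linear_combination h1
      rw [hzf]
      refine ⟨by simp, by simp, by simp; linarith⟩
  have hs2 : s ^ 2 = z ^ 2 - (F : ℂ) ^ 2 := by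
    have h := Complex.cpow_nat_inv_pow (z ^ 2 - (F:ℂ)^2) (n := 2) two_ne_zero
    rw [hs_def, one_div]
    exact_mod_cast h
  have hT2 : funT F z ^ 2 = z ^ 2 - (F : ℂ) ^ 2 := by
    unfold funT
    split
    · exact hs2
    · rw [neg_pow]; simpa using hs2
  have hUT : funU F z = (z - funT F z) / F := by
    unfold funU funT
    split <;> ring
  set T := funT F z with hT_def
  have hre0 := congrArg Complex.re hs2
  have him0 := congrArg Complex.im hs2
  simp only [pow_two, Complex.mul_re, Complex.mul_im, Complex.sub_re, Complex.sub_im,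
    Complex.ofReal_re, Complex.ofReal_im] at hre0 him0
  have hre : s.re ^ 2 - s.im ^ 2 = z.re ^ 2 - z.im ^ 2 - F ^ 2 := by
    linear_combination hre0
  have him : s.re * s.im = z.re * z.im := by linear_combination him0 / 2
  have hp0 : 0 ≤ s.re := sqrt_re_nonneg' _
  have hp_pos : z.re ≠ 0 → 0 < s.re := by
    intro ha
    rcases lt_or_eq_of_le hp0 with h | h
    · exact h
    · exfalso
      have hb : z.im = 0 := by
        have h2 : z.re * z.im = 0 := by rw [← him, ← h]; ring
        rcases mul_eq_zero.1 h2 with h' | h'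
        · exact absurd h' ha
        · exact h'
      have haF : z.re < -F ∨ F < z.re := by
        by_contra hcon
        push_neg at hcon
        exact hseg ⟨hb, hcon.1, hcon.2⟩
      have hq : -s.im^2 = z.re^2 - F^2 := by
        linear_combination hre + s.re * h - z.im * hb
      rcases haF with h' | h' <;> nlinarith
  have hpos : 0 < z.re * T.re + z.im * T.im := by
    by_cases hc : z ∈ Cplus
    · have hTre : T.re = s.re ∧ T.im = s.im := by
        rw [hT_def]; unfold funT; rw [if_pos hc]; exact ⟨rfl, rfl⟩
      rw [hTre.1, hTre.2]
      rcases hc with h | ⟨h1, h2⟩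
      · have hp' : 0 < s.re := hp_pos h.ne'
        nlinarith [sq_nonneg z.im, mul_pos h hp', him]
      · have hb : z.im ≠ 0 := by
          intro hb0
          exact hseg ⟨hb0, by rw [h1]; constructor <;> linarith⟩
        have hbpos : 0 < z.im := lt_of_le_of_ne h2 (Ne.symm hb)
        have hq2 : s.im ^ 2 = s.re ^ 2 + z.im ^ 2 + F ^ 2 := by
          rw [h1] at hre; nlinarith [hre]
        have hq0 : s.im ≠ 0 := by intro h0; rw [h0] at hq2; nlinarith
        have hp' : s.re = 0 := by
          have h2' : s.re * s.im = 0 := by rw [him, h1]; ring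
          rcases mul_eq_zero.1 h2' with h' | h'
          · exact h'
          · exact absurd h' hq0
        have hqpos : 0 < s.im := lt_of_le_of_ne (sqrt_im_nonneg' _ hp') (Ne.symm hq0)
        rw [h1, hp']
        simpa using mul_pos hbpos hqpos
    · have hTre : T.re = -s.re ∧ T.im = -s.im := by
        rw [hT_def]; unfold funT; rw [if_neg hc]; exact ⟨rfl, rfl⟩
      rw [hTre.1, hTre.2]
      have hc' : z.re < 0 ∨ (z.re = 0 ∧ z.im < 0) := by
        simp only [Cplus, Set.mem_setOf_eq] at hc
        push_neg at hc
        rcases eq_or_lt_of_le hc.1 with h | h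
        · exact Or.inr ⟨h, hc.2 h⟩
        · exact Or.inl h
      rcases hc' with h | ⟨h1, h2⟩
      · have hp' : 0 < s.re := hp_pos h.ne
        nlinarith [sq_nonneg z.im, mul_pos (neg_pos.2 h) hp', him]
      · have hq2 : s.im ^ 2 = s.re ^ 2 + z.im ^ 2 + F ^ 2 := by
          rw [h1] at hre; nlinarith [hre]
        have hq0 : s.im ≠ 0 := by intro h0; rw [h0] at hq2; nlinarith
        have hp' : s.re = 0 := by
          have h2' : s.re * s.im = 0 := by rw [him, h1]; ring
          rcases mul_eq_zero.1 h2' with h' | h'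
          · exact h'
          · exact absurd h' hq0
        have hqpos : 0 < s.im := lt_of_le_of_ne (sqrt_im_nonneg' _ hp') (Ne.symm hq0)
        rw [h1, hp']
        nlinarith [mul_pos (neg_pos.2 h2) hqpos]
  have hprod : (z - T) * (z + T) = (F:ℂ)^2 := by
    have h : (z - T) * (z + T) = z^2 - T^2 := by ring
    rw [h, hT2]; ring
  have hu_ne : funU F z ≠ 0 := by
    rw [hUT]
    intro h0
    have hzT : z = T := by
      have := (div_eq_zero_iff.mp h0).resolve_right hF0
      exact sub_eq_zero.mp this
    have h2 : (0:ℂ) = (F:ℂ)^2 := by rw [← hprod, ← hzT]; ring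
    exact (pow_ne_zero 2 hF0) h2.symm
  have hinv : (funU F z)⁻¹ = (z + T) / F := by
    apply inv_eq_of_mul_eq_one_right
    rw [hUT]
    field_simp
    linear_combination hprod
  have hid : z = F * (funU F z + (funU F z)⁻¹) / 2 := by
    rw [hinv, hUT]
    field_simp
    ring
  have habs : ‖funU F z‖ < 1 := by
    have hlt : Complex.normSq (z - T) < Complex.normSq (z + T) := by
      simp only [Complex.normSq_apply, Complex.sub_re, Complex.sub_im,
        Complex.add_re, Complex.add_im]
      nlinarith [hpos]
    have hmul : Complex.normSq (z - T) * Complex.normSq (z + T) = F^4 := by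
      rw [← Complex.normSq_mul, hprod]
      have h : ((F:ℂ)^2) = ((F^2 : ℝ) : ℂ) := by push_cast; ring
      rw [h, Complex.normSq_ofReal]
      ring
    have h1 : Complex.normSq (z - T) < F^2 := by
      by_contra hcon
      push_neg at hcon
      have hy : F^2 < Complex.normSq (z + T) := lt_of_le_of_lt hcon hlt
      have t1 : 0 ≤ (Complex.normSq (z - T) - F^2) * Complex.normSq (z + T) :=
        mul_nonneg (by linarith) (Complex.normSq_nonneg _)
      have t2 : F^2 * F^2 < F^2 * Complex.normSq (z + T) :=
        mul_lt_mul_of_pos_left hy (by positivity)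
      nlinarith [t1, t2, hmul]
    rw [hUT, norm_div, div_lt_one (norm_pos_iff.mpr hF0)]
    have h2 : ‖z - T‖ ^ 2 < (‖(F:ℂ)‖) ^ 2 := by
      rw [Complex.sq_norm, Complex.sq_norm, Complex.normSq_ofReal]
      nlinarith [h1]
    exact lt_of_pow_lt_pow_left₀ 2 (norm_nonneg _) h2
  exact ⟨hu_ne, habs, hid⟩
/-- for `F > 0`, `U_F` maps `ℂ ∖ [−F,F]` bijectively onto the punctured
open unit disc: it is injective on `ℂ ∖ [−F,F]` and its image of that set equals
`Metric.ball 0 1 ∖ {0}`. -/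
theorem stmt7 (F : ℝ) (hF : 0 < F) :
    Set.InjOn (funU F) (segC F)ᶜ ∧
    funU F '' (segC F)ᶜ = Metric.ball (0 : ℂ) 1 \ {0} := by
  have hF0 : (F : ℂ) ≠ 0 := by exact_mod_cast hF.ne'
  constructor
  · intro z1 h1 z2 h2 heq
    obtain ⟨_, _, hid1⟩ := main_lemma F hF h1
    obtain ⟨_, _, hid2⟩ := main_lemma F hF h2
    rw [hid1, hid2, heq]
  · ext u
    constructor
    · rintro ⟨z, hzc, rfl⟩
      obtain ⟨hne, habs, _⟩ := main_lemma F hF hzc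
      refine ⟨Metric.mem_ball.2 ?_, by simpa using hne⟩
      simpa [Complex.dist_eq] using habs
    · rintro ⟨hball, hne0⟩
      have hne0' : u ≠ 0 := by simpa using hne0
      have habs : ‖u‖ < 1 := by
        simpa [Complex.dist_eq] using Metric.mem_ball.1 hball
      have hnpos : 0 < Complex.normSq u := Complex.normSq_pos.2 hne0'
      have hn0 : Complex.normSq u ≠ 0 := hnpos.ne'
      have hnlt : Complex.normSq u < 1 := by
        have := Complex.normSq_eq_norm_sq u
        nlinarith [norm_nonneg u]
      set z := (F : ℂ) * (u + u⁻¹) / 2 with hz_def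
      have hz_eq : z = ((F/2 : ℝ) : ℂ) * (u + u⁻¹) := by
        rw [hz_def]; push_cast; ring
      have hz_im : z.im = (F/2) * (u.im - u.im / Complex.normSq u) := by
        rw [hz_eq, Complex.mul_im, Complex.ofReal_re, Complex.ofReal_im,
          Complex.add_im, Complex.add_re, Complex.inv_im]
        ring
      have hz_re : z.re = (F/2) * (u.re + u.re / Complex.normSq u) := by
        rw [hz_eq, Complex.mul_re, Complex.ofReal_re, Complex.ofReal_im,
          Complex.add_im, Complex.add_re, Complex.inv_re]
        ring
      have hz_notin : z ∉ segC F := by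
        intro hmem
        obtain ⟨him0, hrel, hrer⟩ := hmem
        rw [hz_im] at him0
        have hX : u.im - u.im / Complex.normSq u = 0 := by
          rcases mul_eq_zero.1 him0 with h | h
          · exfalso; linarith
          · exact h
        have h5 : u.im = u.im * Complex.normSq u :=
          (div_eq_iff hn0).1 (by linarith)
        have h3 : u.im * (Complex.normSq u - 1) = 0 := by linear_combination -h5
        have hyu : u.im = 0 := by
          rcases mul_eq_zero.1 h3 with h | h
          · exact h
          · exfalso; linarith
        have hxu : u.re ≠ 0 := fun hx => hne0' (Complex.ext hx hyu)
        have hnx : Complex.normSq u = u.re ^ 2 := by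
          rw [Complex.normSq_apply, hyu]; ring
        have hratio : u.re / u.re ^ 2 = 1 / u.re := by
          field_simp
        have hx2 : u.re ^ 2 < 1 := by rw [← hnx]; exact hnlt
        rcases lt_or_gt_of_ne hxu with h | h
        · have hx1 : (0:ℝ) < u.re + 1 := by nlinarith
          have hplus : 0 < (u.re + 1)^2 := by positivity
          have hs : u.re + 1/u.re + 2 = (u.re+1)^2/u.re := by
            field_simp; ring
          have hq : (u.re+1)^2/u.re < 0 := div_neg_of_pos_of_neg hplus h
          have hlt2 : u.re + 1/u.re < -2 := by linarith
          have : z.re < -F := by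
            rw [hz_re, hnx, hratio]
            nlinarith [mul_lt_mul_of_pos_left hlt2 (half_pos hF)]
          linarith
        · have hx1 : (0:ℝ) < 1 - u.re := by nlinarith
          have hplus : 0 < (u.re - 1)^2 := by nlinarith
          have hs : u.re + 1/u.re - 2 = (u.re-1)^2/u.re := by
            field_simp; ring
          have hq : 0 < (u.re-1)^2/u.re := div_pos hplus h
          have hlt2 : 2 < u.re + 1/u.re := by linarith
          have : F < z.re := by
            rw [hz_re, hnx, hratio]
            nlinarith [mul_lt_mul_of_pos_left hlt2 (half_pos hF)]
          linarith
      refine ⟨z, hz_notin, ?_⟩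
      obtain ⟨hne', habs', hid'⟩ := main_lemma F hF hz_notin
      set u' := funU F z with hu'_def
      have hsum : u + u⁻¹ = u' + u'⁻¹ := by
        have h1 : (F : ℂ) * (u + u⁻¹) / 2 = (F : ℂ) * (u' + u'⁻¹) / 2 := by
          rw [← hz_def, hid']
        have h2 : (F : ℂ) * (u + u⁻¹) = (F : ℂ) * (u' + u'⁻¹) := by
          linear_combination 2 * h1
        exact mul_left_cancel₀ hF0 h2
      have hkey : (u' - u) * (u * u' - 1) = 0 := by
        have h2 := hsum
        field_simp at h2
        linear_combination (-1 : ℂ) * h2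
      rcases mul_eq_zero.1 hkey with h | h
      · exact (sub_eq_zero.1 h)
      · exfalso
        have habs1 : ‖u * u'‖ = 1 := by
          have : u * u' = 1 := by linear_combination h
          rw [this]; simp
        rw [norm_mul] at habs1
        nlinarith [norm_nonneg u, norm_nonneg u']
end Aux
end

section
/- Let F ∈ ℝ with F > 0. Then the three functions U_F, T_F and W_F are holomorphic on ℂ ∖ [−F,F]; that is, each of them is complex-differentiable at every point of the open set ℂ ∖ [−F,F] (DifferentiableOn ℂ). -/
open scoped Classical

open Complex

lemma exp_pi_I_half : Complex.exp ((Real.pi : ℂ) * I * (1 / 2)) = I := by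
  have hh : ((Real.pi : ℂ) * I * (1 / 2)) = ((Real.pi / 2 : ℝ) : ℂ) * I := by push_cast; ring
  rw [hh, Complex.exp_mul_I, ← Complex.ofReal_cos, ← Complex.ofReal_sin,
    Real.cos_pi_div_two, Real.sin_pi_div_two]
  simp

lemma sqrt_neg_eq₁ {w : ℂ} (h : 0 < w.im ∨ (w.im = 0 ∧ w.re < 0)) :
    (-w) ^ ((1 : ℂ) / 2) = -I * w ^ ((1 : ℂ) / 2) := by
  have hw : w ≠ 0 := by
    rintro rfl
    simp at h
  have hlog : Complex.log (-w) = Complex.log w - Real.pi * I := by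
    rw [Complex.log, Complex.log, norm_neg, Complex.arg_neg_eq_arg_sub_pi_iff.mpr h]
    push_cast; ring
  rw [Complex.cpow_def_of_ne_zero (neg_ne_zero.2 hw), Complex.cpow_def_of_ne_zero hw, hlog,
    sub_mul, Complex.exp_sub, exp_pi_I_half, div_eq_mul_inv, Complex.inv_I]
  ring

lemma sqrt_neg_eq₂ {w : ℂ} (h : w.im < 0 ∨ (w.im = 0 ∧ 0 < w.re)) :
    (-w) ^ ((1 : ℂ) / 2) = I * w ^ ((1 : ℂ) / 2) := by
  have hw : w ≠ 0 := by
    rintro rfl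
    simp at h
  have hlog : Complex.log (-w) = Complex.log w + Real.pi * I := by
    rw [Complex.log, Complex.log, norm_neg, Complex.arg_neg_eq_arg_add_pi_iff.mpr h]
    push_cast; ring
  rw [Complex.cpow_def_of_ne_zero (neg_ne_zero.2 hw), Complex.cpow_def_of_ne_zero hw, hlog,
    add_mul, Complex.exp_add, exp_pi_I_half]
  ring

lemma sq_sub_re (F : ℝ) (z : ℂ) : (z ^ 2 - (F : ℂ) ^ 2).re = z.re ^ 2 - z.im ^ 2 - F ^ 2 := by
  simp [pow_two, Complex.mul_re, Complex.mul_im]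
  try ring

lemma sq_sub_im (F : ℝ) (z : ℂ) : (z ^ 2 - (F : ℂ) ^ 2).im = 2 * z.re * z.im := by
  simp [pow_two, Complex.mul_re, Complex.mul_im]
  try ring

lemma funT_diff (F : ℝ) (hF : 0 < F) : DifferentiableOn ℂ (funT F) (segC F)ᶜ := by
  intro z hz
  apply DifferentiableAt.differentiableWithinAt
  have hz' : z ∉ segC F := hz
  have hdiffv : DifferentiableAt ℂ (fun w : ℂ => w ^ 2 - (F : ℂ) ^ 2) z :=
    (differentiableAt_pow 2).sub_const _
  rcases lt_trichotomy z.re 0 with h | h | h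
  · -- left half-plane
    have hev : funT F =ᶠ[nhds z] fun w => -((w ^ 2 - (F : ℂ) ^ 2) ^ ((1 : ℂ) / 2)) := by
      filter_upwards [(isOpen_lt Complex.continuous_re continuous_const).mem_nhds h] with w hw
      have hnc : w ∉ Cplus := by
        rintro (h1 | ⟨h1, _⟩) <;> simp_all <;> linarith
      simp [funT, hnc]
    rw [hev.differentiableAt_iff]
    have hslit : (z ^ 2 - (F : ℂ) ^ 2) ∈ Complex.slitPlane := by
      rw [Complex.mem_slitPlane_iff]
      by_cases hy : z.im = 0
      · left
        rw [sq_sub_re]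
        have hlt : z.re < -F := by
          by_contra hc; push_neg at hc
          exact hz' ⟨hy, hc, by linarith⟩
        nlinarith
      · right
        rw [sq_sub_im]
        intro h0
        apply hy
        rcases mul_eq_zero.mp h0 with h1 | h1
        · exact absurd h1 (by intro hc; nlinarith)
        · exact h1
    exact (hdiffv.cpow (differentiableAt_const _) hslit).neg
  · -- imaginary axis
    have hy : z.im ≠ 0 := by
      intro h0
      exact hz' ⟨h0, by rw [h]; constructor <;> linarith⟩
    rcases hy.lt_or_gt with hy | hy
    · -- im < 0
      have hev : funT F =ᶠ[nhds z]
          fun w => -I * (-(w ^ 2 - (F : ℂ) ^ 2)) ^ ((1 : ℂ) / 2) := by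
        filter_upwards [(isOpen_lt Complex.continuous_im continuous_const).mem_nhds hy] with w hw
        have hwim : w.im < 0 := hw
        rcases lt_trichotomy w.re 0 with hr | hr | hr
        · have hnc : w ∉ Cplus := by rintro (h1 | ⟨h1, _⟩) <;> linarith
          have hh := sqrt_neg_eq₁ (w := w ^ 2 - (F : ℂ) ^ 2)
            (Or.inl (by rw [sq_sub_im]; nlinarith))
          simp only [funT, if_neg hnc, hh]
          rw [show -I * (-I * (w ^ 2 - (F : ℂ) ^ 2) ^ ((1 : ℂ) / 2))
              = (I * I) * (w ^ 2 - (F : ℂ) ^ 2) ^ ((1 : ℂ) / 2) by ring, Complex.I_mul_I]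
          ring
        · have hnc : w ∉ Cplus := by rintro (h1 | ⟨h1, h2⟩) <;> linarith
          have hh := sqrt_neg_eq₁ (w := w ^ 2 - (F : ℂ) ^ 2)
            (Or.inr ⟨by rw [sq_sub_im]; nlinarith, by rw [sq_sub_re]; nlinarith⟩)
          simp only [funT, if_neg hnc, hh]
          rw [show -I * (-I * (w ^ 2 - (F : ℂ) ^ 2) ^ ((1 : ℂ) / 2))
              = (I * I) * (w ^ 2 - (F : ℂ) ^ 2) ^ ((1 : ℂ) / 2) by ring, Complex.I_mul_I]
          ring
        · have hc : w ∈ Cplus := Or.inl hr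
          have hh := sqrt_neg_eq₂ (w := w ^ 2 - (F : ℂ) ^ 2)
            (Or.inl (by rw [sq_sub_im]; nlinarith))
          simp only [funT, if_pos hc, hh]
          rw [show -I * (I * (w ^ 2 - (F : ℂ) ^ 2) ^ ((1 : ℂ) / 2))
              = -(I * I) * (w ^ 2 - (F : ℂ) ^ 2) ^ ((1 : ℂ) / 2) by ring, Complex.I_mul_I]
          ring
      rw [hev.differentiableAt_iff]
      have hslit : -(z ^ 2 - (F : ℂ) ^ 2) ∈ Complex.slitPlane := by
        rw [Complex.mem_slitPlane_iff]
        left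
        rw [Complex.neg_re, sq_sub_re]
        nlinarith
      exact (hdiffv.neg.cpow (differentiableAt_const _) hslit).const_mul _
    · -- im > 0
      have hev : funT F =ᶠ[nhds z]
          fun w => I * (-(w ^ 2 - (F : ℂ) ^ 2)) ^ ((1 : ℂ) / 2) := by
        filter_upwards [(isOpen_lt continuous_const Complex.continuous_im).mem_nhds hy] with w hw
        have hwim : 0 < w.im := hw
        rcases lt_trichotomy w.re 0 with hr | hr | hr
        · have hnc : w ∉ Cplus := by rintro (h1 | ⟨h1, _⟩) <;> linarith
          have hh := sqrt_neg_eq₂ (w := w ^ 2 - (F : ℂ) ^ 2)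
            (Or.inl (by rw [sq_sub_im]; nlinarith))
          simp only [funT, if_neg hnc, hh]
          rw [show I * (I * (w ^ 2 - (F : ℂ) ^ 2) ^ ((1 : ℂ) / 2))
              = (I * I) * (w ^ 2 - (F : ℂ) ^ 2) ^ ((1 : ℂ) / 2) by ring, Complex.I_mul_I]
          ring
        · have hc : w ∈ Cplus := Or.inr ⟨hr, hwim.le⟩
          have hh := sqrt_neg_eq₁ (w := w ^ 2 - (F : ℂ) ^ 2)
            (Or.inr ⟨by rw [sq_sub_im]; nlinarith, by rw [sq_sub_re]; nlinarith⟩)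
          simp only [funT, if_pos hc, hh]
          rw [show I * (-I * (w ^ 2 - (F : ℂ) ^ 2) ^ ((1 : ℂ) / 2))
              = -(I * I) * (w ^ 2 - (F : ℂ) ^ 2) ^ ((1 : ℂ) / 2) by ring, Complex.I_mul_I]
          ring
        · have hc : w ∈ Cplus := Or.inl hr
          have hh := sqrt_neg_eq₁ (w := w ^ 2 - (F : ℂ) ^ 2)
            (Or.inl (by rw [sq_sub_im]; nlinarith))
          simp only [funT, if_pos hc, hh]
          rw [show I * (-I * (w ^ 2 - (F : ℂ) ^ 2) ^ ((1 : ℂ) / 2))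
              = -(I * I) * (w ^ 2 - (F : ℂ) ^ 2) ^ ((1 : ℂ) / 2) by ring, Complex.I_mul_I]
          ring
      rw [hev.differentiableAt_iff]
      have hslit : -(z ^ 2 - (F : ℂ) ^ 2) ∈ Complex.slitPlane := by
        rw [Complex.mem_slitPlane_iff]
        left
        rw [Complex.neg_re, sq_sub_re]
        nlinarith
      exact (hdiffv.neg.cpow (differentiableAt_const _) hslit).const_mul _
  · -- right half-plane
    have hev : funT F =ᶠ[nhds z] fun w => (w ^ 2 - (F : ℂ) ^ 2) ^ ((1 : ℂ) / 2) := by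
      filter_upwards [(isOpen_lt continuous_const Complex.continuous_re).mem_nhds h] with w hw
      have hc : w ∈ Cplus := Or.inl hw
      simp [funT, hc]
    rw [hev.differentiableAt_iff]
    have hslit : (z ^ 2 - (F : ℂ) ^ 2) ∈ Complex.slitPlane := by
      rw [Complex.mem_slitPlane_iff]
      by_cases hy : z.im = 0
      · left
        rw [sq_sub_re]
        have hlt : F < z.re := by
          by_contra hc; push_neg at hc
          exact hz' ⟨hy, by linarith, hc⟩
        nlinarith
      · right
        rw [sq_sub_im]
        positivity
    exact hdiffv.cpow (differentiableAt_const _) hslit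

lemma slit_aux (F : ℝ) (hF : 0 < F) {z : ℂ} (hz : z ∉ segC F) :
    (z + F) / (z - F) ∈ Complex.slitPlane := by
  have hm : z - (F : ℂ) ≠ 0 := by
    intro h0
    apply hz
    have : z = (F : ℂ) := by linear_combination h0
    refine ⟨by rw [this]; simp, ?_, ?_⟩ <;> rw [this] <;> simp <;> linarith
  by_contra hns
  rw [Complex.mem_slitPlane_iff] at hns
  push_neg at hns
  obtain ⟨hre, him⟩ := hns
  set q : ℂ := (z + F) / (z - F) with hqdef
  set t : ℝ := q.re with htdef
  have hq : q = (t : ℂ) := Complex.ext rfl (by simpa using him)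
  have ht : t ≤ 0 := hre
  have hq1 : (1 : ℂ) - q ≠ 0 := by
    rw [hq]
    intro h0
    have : (1 : ℝ) - t = 0 := by
      have := congrArg Complex.re h0
      simpa using this
    linarith
  have hqe : z + F = q * (z - F) := by
    rw [hqdef, div_mul_cancel₀ _ hm]
  have hzeq : z = -(F : ℂ) * (q + 1) / (1 - q) := by
    rw [eq_div_iff hq1]
    linear_combination hqe
  have hzr : z = ((-F * (t + 1) / (1 - t) : ℝ) : ℂ) := by
    rw [hzeq, hq]
    push_cast
    ring
  apply hz
  have h1t : (0 : ℝ) < 1 - t := by linarith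
  refine ⟨by rw [hzr]; exact Complex.ofReal_im _, ?_, ?_⟩
  · rw [hzr]
    simp only [Complex.ofReal_re]
    rw [le_div_iff₀ h1t]
    nlinarith
  · rw [hzr]
    simp only [Complex.ofReal_re]
    rw [div_le_iff₀ h1t]
    nlinarith

lemma seg_neg (F : ℝ) {z : ℂ} (hz : z ∉ segC F) : -z ∉ segC F := by
  intro h
  exact hz ⟨by simpa using congrArg Neg.neg h.1, by
    have := h.2.2; simp at this; linarith, by
    have := h.2.1; simp at this; linarith⟩

/-- for `F > 0`, the functions `U_F`, `T_F`, `W_F` are holomorphic on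
`ℂ ∖ [−F,F]`. -/
theorem stmt9 (F : ℝ) (hF : 0 < F) :
    DifferentiableOn ℂ (funU F) (segC F)ᶜ ∧
    DifferentiableOn ℂ (funT F) (segC F)ᶜ ∧
    DifferentiableOn ℂ (funW F) (segC F)ᶜ := by
  have hT : DifferentiableOn ℂ (funT F) (segC F)ᶜ := funT_diff F hF
  have hU : DifferentiableOn ℂ (funU F) (segC F)ᶜ := by
    have heq : funU F = fun z => (z - funT F z) / F := by
      funext z
      simp only [funU, funT]
      split_ifs <;> ring
    rw [heq]
    exact (differentiableOn_id.sub hT).div_const _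
  refine ⟨hU, hT, ?_⟩
  intro z hz
  apply DifferentiableAt.differentiableWithinAt
  have hz' : z ∉ segC F := hz
  have hm : z - (F : ℂ) ≠ 0 := by
    intro h0
    apply hz'
    have : z = (F : ℂ) := by linear_combination h0
    refine ⟨by rw [this]; simp, ?_, ?_⟩ <;> rw [this] <;> simp <;> linarith
  have hp : z + (F : ℂ) ≠ 0 := by
    intro h0
    apply hz'
    have : z = -(F : ℂ) := by linear_combination h0
    refine ⟨by rw [this]; simp, ?_, ?_⟩ <;> rw [this] <;> simp <;> linarith
  have hs1 : (z + F) / (z - F) ∈ Complex.slitPlane := slit_aux F hF hz'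
  have hs2 : (z - F) / (z + F) ∈ Complex.slitPlane := by
    have h := slit_aux F hF (seg_neg F hz')
    have heq : (-z + (F : ℂ)) / (-z - F) = (z - F) / (z + F) := by
      rw [show (-z + (F : ℂ)) = -(z - F) by ring, show (-z - (F : ℂ)) = -(z + F) by ring,
        neg_div_neg_eq]
    rwa [heq] at h
  have d1 : DifferentiableAt ℂ (fun w : ℂ => (w + F) / (w - F)) z :=
    (differentiableAt_id.add_const _).div (differentiableAt_id.sub_const _) hm
  have d2 : DifferentiableAt ℂ (fun w : ℂ => (w - F) / (w + F)) z :=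
    (differentiableAt_id.sub_const _).div (differentiableAt_id.add_const _) hp
  exact (d1.cpow (differentiableAt_const _) hs1).add
    (d2.cpow (differentiableAt_const _) hs2)
end

section
/- Let t ∈ ℝ with 0 < t < 1 and let F = 2√(t/(1−t²)). Define f : ℂ ∖ [−F,F] → ℝ by f(z) = t·Re(z²) − |z|² + Re(U_F(z)²) − 2·log|U_F(z)| + log t + 1. Then f(z) = 0 for every z on the ellipse ∂E_t, and f(z) < 0 for every z ∈ ℂ ∖ (∂E_t ∪ [−F,F]). -/
open scoped Classical

/-- The distance `F = 2√(t/(1−t²))` of the foci of the ellipse from the origin. -/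
noncomputable def focF (t : ℝ) : ℝ := 2 * Real.sqrt (t / (1 - t ^ 2))

/-- The major semi-axis `a_t = √((1+t)/(1−t))`. -/
noncomputable def semiA (t : ℝ) : ℝ := Real.sqrt ((1 + t) / (1 - t))

/-- The minor semi-axis `b_t = √((1−t)/(1+t))`. -/
noncomputable def semiB (t : ℝ) : ℝ := Real.sqrt ((1 - t) / (1 + t))

/-- The ellipse `∂E_t = {x+iy : x²/a_t² + y²/b_t² = 1}`. -/
def ellipseBd (t : ℝ) : Set ℂ :=
  {z : ℂ | z.re ^ 2 / semiA t ^ 2 + z.im ^ 2 / semiB t ^ 2 = 1}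

/-- The open interior `E_t = {x+iy : x²/a_t² + y²/b_t² < 1}` of the ellipse. -/
def ellipseInt (t : ℝ) : Set ℂ :=
  {z : ℂ | z.re ^ 2 / semiA t ^ 2 + z.im ^ 2 / semiB t ^ 2 < 1}

/-- The exponent function
`f(z) = t·Re(z²) − |z|² + Re(U_F(z)²) − 2·log|U_F(z)| + log t + 1` with
`F = 2√(t/(1−t²))`. -/
noncomputable def funf (t : ℝ) (z : ℂ) : ℝ :=
  t * (z ^ 2).re - ‖z‖ ^ 2 + ((funU (focF t) z) ^ 2).re -
    2 * Real.log ‖funU (focF t) z‖ + Real.log t + 1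

private lemma myLog1 {x : ℝ} (hx0 : 0 < x) (hx1 : x ≤ 1) :
    Real.log x ≤ 2 * (x - 1) / (x + 1) := by
  have key : AntitoneOn (fun y : ℝ => 2 * (y - 1) / (y + 1) - Real.log y) (Set.Ioc 0 1) := by
    have hderiv : ∀ y ∈ interior (Set.Ioc (0:ℝ) 1),
        HasDerivAt (fun y : ℝ => 2 * (y - 1) / (y + 1) - Real.log y)
          ((2 * (y + 1) - 2 * (y - 1)) / (y + 1) ^ 2 - y⁻¹) y := by
      intro y hy
      rw [interior_Ioc] at hy
      have hy0 : 0 < y := hy.1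
      have h1 : HasDerivAt (fun y : ℝ => 2 * (y - 1)) 2 y := by
        simpa using ((hasDerivAt_id y).sub_const 1).const_mul 2
      have h2 : HasDerivAt (fun y : ℝ => y + 1) 1 y := (hasDerivAt_id y).add_const 1
      have h3 := h1.div h2 (by linarith)
      have h4 := Real.hasDerivAt_log hy0.ne'
      have h5 := h3.sub h4
      simp only [mul_one] at h5
      exact h5
    apply antitoneOn_of_deriv_nonpos (convex_Ioc 0 1)
    · apply ContinuousOn.sub
      · apply ContinuousOn.div (by fun_prop) (by fun_prop)
        intro y hy; have := hy.1; intro h; linarith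
      · exact Real.continuousOn_log.mono (by intro y hy; exact Set.mem_compl_singleton_iff.2 hy.1.ne')
    · intro y hy
      exact ((hderiv y hy).differentiableAt).differentiableWithinAt
    · intro y hy
      rw [(hderiv y hy).deriv]
      rw [interior_Ioc] at hy
      have hy0 : 0 < y := hy.1
      rw [sub_nonpos, inv_eq_one_div, div_le_div_iff₀ (by positivity) hy0]
      nlinarith [sq_nonneg (y - 1)]
  have h := key (Set.mem_Ioc.2 ⟨hx0, hx1⟩) (Set.mem_Ioc.2 ⟨one_pos, le_refl 1⟩) hx1
  simp only [Real.log_one] at h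
  linarith

private lemma myLog2 {x : ℝ} (hx : 1 ≤ x) : Real.log x ≤ (x ^ 2 - 1) / (2 * x) := by
  have hx0 : 0 < x := lt_of_lt_of_le one_pos hx
  rcases eq_or_lt_of_le hx with h | h
  · simp [← h]
  · have hu : 0 < Real.log x := Real.log_pos h
    have := (Real.self_lt_sinh_iff).2 hu
    rw [Real.sinh_eq, Real.exp_log hx0, Real.exp_neg, Real.exp_log hx0] at this
    have heq : (x - x⁻¹) / 2 = (x ^ 2 - 1) / (2 * x) := by field_simp
    linarith [this, heq ▸ this]
private lemma mySq (w : ℂ) : (w ^ ((1 : ℂ) / 2)) ^ 2 = w := by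
  have h := Complex.cpow_nat_inv_pow w (two_ne_zero)
  norm_num at h
  exact h

private lemma myRe_nonneg (w : ℂ) : 0 ≤ (w ^ ((1 : ℂ) / 2)).re := by
  rw [one_div, Complex.cpow_inv_two_re]
  exact Real.sqrt_nonneg _

private lemma myRe_pos {w : ℂ} (h : w.im ≠ 0) : 0 < (w ^ ((1 : ℂ) / 2)).re := by
  rw [one_div, Complex.cpow_inv_two_re]
  apply Real.sqrt_pos.2
  have h1 : |w.re| < ‖w‖ := (Complex.abs_re_lt_norm).2 h
  have h2 : -w.re ≤ |w.re| := neg_le_abs _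
  linarith

private lemma myIm_pos {w : ℂ} (h : 0 < w.im) : 0 < (w ^ ((1 : ℂ) / 2)).im := by
  rw [one_div, Complex.cpow_inv_two_im_eq_sqrt h.le]
  apply Real.sqrt_pos.2
  have h1 : |w.re| < ‖w‖ := (Complex.abs_re_lt_norm).2 h.ne'
  have h2 : w.re ≤ |w.re| := le_abs_self _
  linarith

private lemma myIm_neg {w : ℂ} (h : w.im < 0) : (w ^ ((1 : ℂ) / 2)).im < 0 := by
  rw [one_div, Complex.cpow_inv_two_im_eq_neg_sqrt h]
  simp only [neg_neg, Left.neg_neg_iff]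
  apply Real.sqrt_pos.2
  have h1 : |w.re| < ‖w‖ := (Complex.abs_re_lt_norm).2 h.ne
  have h2 : w.re ≤ |w.re| := le_abs_self _
  linarith

private lemma myReal_pos {w : ℂ} (h : w.im = 0) (h2 : 0 < w.re) :
    (w ^ ((1 : ℂ) / 2)).im = 0 ∧ 0 < (w ^ ((1 : ℂ) / 2)).re := by
  have habs : ‖w‖ = w.re := by
    rw [Complex.norm_def, Complex.normSq_apply, h]
    simpa using Real.sqrt_mul_self h2.le
  constructor
  · rw [one_div, Complex.cpow_inv_two_im_eq_sqrt (le_of_eq h.symm), habs]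
    simp
  · rw [one_div, Complex.cpow_inv_two_re, habs]
    positivity

private lemma myReal_neg {w : ℂ} (h : w.im = 0) (h2 : w.re < 0) :
    (w ^ ((1 : ℂ) / 2)).re = 0 ∧ 0 < (w ^ ((1 : ℂ) / 2)).im := by
  have habs : ‖w‖ = -w.re := by
    rw [Complex.norm_def, Complex.normSq_apply, h]
    have : w.re * w.re + 0 * 0 = (-w.re) * (-w.re) := by ring
    rw [this]
    exact Real.sqrt_mul_self (by linarith)
  constructor
  · rw [one_div, Complex.cpow_inv_two_re, habs]
    simp
  · rw [one_div, Complex.cpow_inv_two_im_eq_sqrt (le_of_eq h.symm), habs]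
    apply Real.sqrt_pos.2
    linarith

set_option maxHeartbeats 1000000 in
private lemma myCore (t : ℝ) (ht0 : 0 < t) (ht1 : t < 1) (z : ℂ)
    (hz : z ∉ segC (focF t)) :
    ∃ q r : ℝ, 0 < r ∧ r < 1 ∧ (z ∈ ellipseBd t ↔ r = t) ∧
      funf t z = -t * (r + 1) ^ 2 / ((1 + t) * r) + r - Real.log r + Real.log t + 1
        - 2 * q ^ 2 * (r - t) ^ 2 / ((1 - t ^ 2) * r ^ 2) := by
  have ht2 : 0 < 1 - t ^ 2 := by nlinarith
  set F := focF t with hFdef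
  have hF : 0 < F := by
    rw [hFdef]; unfold focF
    have : 0 < t / (1 - t ^ 2) := div_pos ht0 ht2
    positivity
  have hFc : F ^ 2 = 4 * t / (1 - t ^ 2) := by
    rw [hFdef]; unfold focF
    rw [mul_pow, Real.sq_sqrt (le_of_lt (div_pos ht0 ht2))]
    ring
  set s := (z ^ 2 - (F : ℂ) ^ 2) ^ ((1 : ℂ) / 2) with hsdef
  have hs2 : s ^ 2 = z ^ 2 - (F : ℂ) ^ 2 := mySq _
  set T := funT F z with hTdef
  have hT : T ^ 2 = z ^ 2 - (F : ℂ) ^ 2 := by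
    rw [hTdef]; unfold funT
    split_ifs <;> simpa using hs2
  -- w components
  have hwre : (z ^ 2 - (F : ℂ) ^ 2).re = z.re ^ 2 - z.im ^ 2 - F ^ 2 := by
    simp [pow_two, Complex.mul_re, Complex.mul_im]
    try ring
  have hwim : (z ^ 2 - (F : ℂ) ^ 2).im = 2 * z.re * z.im := by
    simp [pow_two, Complex.mul_re, Complex.mul_im]
    try ring
  -- key positivity
  have hkey : 0 < z.re * T.re + z.im * T.im := by
    by_cases hzp : z ∈ Cplus
    · have hTs : T = s := by rw [hTdef]; unfold funT; rw [if_pos hzp]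
      rw [hTs, hsdef]
      simp only [Cplus, Set.mem_setOf_eq] at hzp
      rcases hzp with hx | ⟨hx0, hy⟩
      · rcases lt_trichotomy z.im 0 with hy | hy | hy
        · have h1 := myRe_pos (w := z ^ 2 - (F:ℂ) ^ 2) (by rw [hwim]; nlinarith)
          have h2 := myIm_neg (w := z ^ 2 - (F:ℂ) ^ 2) (by rw [hwim]; nlinarith)
          nlinarith
        · have hFz : F < z.re := by
            by_contra hc; push_neg at hc
            exact hz ⟨hy, by linarith, hc⟩
          obtain ⟨h1, h2⟩ := myReal_pos (w := z ^ 2 - (F:ℂ) ^ 2)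
            (by rw [hwim, hy]; ring) (by rw [hwre, hy]; nlinarith)
          rw [h1, hy]
          nlinarith
        · have h1 := myRe_pos (w := z ^ 2 - (F:ℂ) ^ 2) (by rw [hwim]; nlinarith)
          have h2 := myIm_pos (w := z ^ 2 - (F:ℂ) ^ 2) (by rw [hwim]; nlinarith)
          nlinarith
      · have hy' : 0 < z.im := by
          rcases lt_or_eq_of_le hy with h | h
          · exact h
          · exfalso; exact hz ⟨h.symm, by rw [hx0]; linarith, by rw [hx0]; linarith⟩
        obtain ⟨h1, h2⟩ := myReal_neg (w := z ^ 2 - (F:ℂ) ^ 2)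
          (by rw [hwim, hx0]; ring) (by rw [hwre, hx0]; nlinarith)
        rw [h1, hx0]
        nlinarith
    · have hTs : T = -s := by rw [hTdef]; unfold funT; rw [if_neg hzp]
      simp only [Cplus, Set.mem_setOf_eq] at hzp
      push_neg at hzp
      obtain ⟨hx, hy⟩ := hzp
      rw [hTs, hsdef]
      simp only [Complex.neg_re, Complex.neg_im]
      rcases lt_or_eq_of_le hx with hx' | hx'
      · rcases lt_trichotomy z.im 0 with hy' | hy' | hy'
        · have h1 := myRe_pos (w := z ^ 2 - (F:ℂ) ^ 2) (by rw [hwim]; nlinarith)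
          have h2 := myIm_pos (w := z ^ 2 - (F:ℂ) ^ 2) (by rw [hwim]; nlinarith)
          nlinarith
        · have hFz : z.re < -F := by
            by_contra hc; push_neg at hc
            exact hz ⟨hy', hc, by linarith⟩
          obtain ⟨h1, h2⟩ := myReal_pos (w := z ^ 2 - (F:ℂ) ^ 2)
            (by rw [hwim, hy']; ring) (by rw [hwre, hy']; nlinarith)
          rw [h1, hy']
          nlinarith
        · have h1 := myRe_pos (w := z ^ 2 - (F:ℂ) ^ 2) (by rw [hwim]; nlinarith)
          have h2 := myIm_neg (w := z ^ 2 - (F:ℂ) ^ 2) (by rw [hwim]; nlinarith)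
          nlinarith
      · have hy' : z.im < 0 := hy hx'
        obtain ⟨h1, h2⟩ := myReal_neg (w := z ^ 2 - (F:ℂ) ^ 2)
          (by rw [hwim, hx']; ring) (by rw [hwre, hx']; nlinarith)
        rw [h1, hx']
        nlinarith
  -- U and its quadratic relation
  have hU : funU F z = (z - T) / F := by
    unfold funU
    rw [hTdef]; unfold funT
    split_ifs with h
    · rfl
    · ring
  set u := funU F z with hudef
  have hFC0 : (F : ℂ) ≠ 0 := Complex.ofReal_ne_zero.2 hF.ne'
  have hquad : (F : ℂ) * (u ^ 2 + 1) = 2 * z * u := by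
    rw [hU]
    field_simp
    linear_combination hT
  have hprod : Complex.normSq (z - T) * Complex.normSq (z + T) = (F ^ 2) ^ 2 := by
    rw [← map_mul]
    have h5 : (z - T) * (z + T) = ((F : ℂ)) ^ 2 := by linear_combination -hT
    rw [h5, ← Complex.ofReal_pow, Complex.normSq_ofReal]
    ring
  have hdiff : Complex.normSq (z + T) - Complex.normSq (z - T)
      = 4 * (z.re * T.re + z.im * T.im) := by
    simp [Complex.normSq_apply, Complex.add_re, Complex.add_im, Complex.sub_re,
      Complex.sub_im]
    ring
  have hF2 : 0 < F ^ 2 := by positivity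
  have hlt : Complex.normSq (z - T) < F ^ 2 := by
    by_contra hc
    push_neg at hc
    nlinarith [Complex.normSq_nonneg (z + T), Complex.normSq_nonneg (z - T)]
  have hu0 : u ≠ 0 := by
    intro h
    rw [h] at hquad
    simp at hquad
    exact hF.ne' hquad
  have hnormu : Complex.normSq u = Complex.normSq (z - T) / F ^ 2 := by
    rw [hU, map_div₀, Complex.normSq_ofReal]
    ring_nf
  set p := u.re with hpdef
  set q := u.im with hqdef
  have hrval : Complex.normSq u = p ^ 2 + q ^ 2 := by
    rw [Complex.normSq_apply]; ring
  have hr0 : 0 < p ^ 2 + q ^ 2 := hrval ▸ Complex.normSq_pos.2 hu0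
  have hr1 : p ^ 2 + q ^ 2 < 1 := by
    rw [← hrval, hnormu, div_lt_one hF2]
    exact hlt
  have htr : 0 < 1 - t * (p ^ 2 + q ^ 2) := by
    have h := mul_lt_of_lt_one_right ht0 hr1
    linarith
  have hBpos : 0 < p ^ 2 * (1 - t) ^ 2 + q ^ 2 * (1 + t) ^ 2 := by
    have h := mul_pos (pow_pos (show (0:ℝ) < 1 - t by linarith) 2) hr0
    nlinarith [sq_nonneg q]
  have e1 : F * (p ^ 2 - q ^ 2 + 1) = 2 * (z.re * p - z.im * q) := by
    have h := congrArg Complex.re hquad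
    simp only [Complex.mul_re, Complex.mul_im, Complex.add_re, Complex.add_im,
      Complex.ofReal_re, Complex.ofReal_im, Complex.one_re, Complex.one_im, pow_two,
      Complex.re_ofNat, Complex.im_ofNat] at h
    rw [pow_two, pow_two]
    linarith
  have e2 : F * (2 * p * q) = 2 * (z.re * q + z.im * p) := by
    have h := congrArg Complex.im hquad
    simp only [Complex.mul_re, Complex.mul_im, Complex.add_re, Complex.add_im,
      Complex.ofReal_re, Complex.ofReal_im, Complex.one_re, Complex.one_im, pow_two,
      Complex.re_ofNat, Complex.im_ofNat] at h
    linarith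
  have hzx : z.re * (p ^ 2 + q ^ 2) = F * p * ((p ^ 2 + q ^ 2) + 1) / 2 := by
    linear_combination (-(p / 2)) * e1 + (-(q / 2)) * e2
  have hzy : z.im * (p ^ 2 + q ^ 2) = F * q * ((p ^ 2 + q ^ 2) - 1) / 2 := by
    linear_combination (q / 2) * e1 + (-(p / 2)) * e2
  have hFc' : F ^ 2 * (1 - t ^ 2) = 4 * t := by
    rw [hFc]; field_simp
  have hx' : z.re ^ 2 * ((p ^ 2 + q ^ 2) ^ 2 * (1 - t ^ 2))
      = t * p ^ 2 * ((p ^ 2 + q ^ 2) + 1) ^ 2 := by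
    have h := congrArg (fun x : ℝ => x ^ 2) hzx
    linear_combination (1 - t ^ 2) * h + (p ^ 2 * ((p ^ 2 + q ^ 2) + 1) ^ 2 / 4) * hFc'
  have hy' : z.im ^ 2 * ((p ^ 2 + q ^ 2) ^ 2 * (1 - t ^ 2))
      = t * q ^ 2 * ((p ^ 2 + q ^ 2) - 1) ^ 2 := by
    have h := congrArg (fun x : ℝ => x ^ 2) hzy
    linear_combination (1 - t ^ 2) * h + (q ^ 2 * ((p ^ 2 + q ^ 2) - 1) ^ 2 / 4) * hFc'
  have habs2 : ‖z‖ ^ 2 = z.re ^ 2 + z.im ^ 2 := by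
    rw [Complex.sq_norm, Complex.normSq_apply]; ring
  have hz2re : (z ^ 2).re = z.re ^ 2 - z.im ^ 2 := by
    simp [pow_two, Complex.mul_re]
    try ring
  have hu2re : (u ^ 2).re = p ^ 2 - q ^ 2 := by
    simp [pow_two, Complex.mul_re]
    try ring
  have hlogu : 2 * Real.log ‖u‖ = Real.log (p ^ 2 + q ^ 2) := by
    rw [Complex.norm_def, hrval, Real.log_sqrt (by positivity)]
    ring
  have hfunf : funf t z = t * (z.re ^ 2 - z.im ^ 2) - (z.re ^ 2 + z.im ^ 2)
      + (p ^ 2 - q ^ 2) - Real.log (p ^ 2 + q ^ 2) + Real.log t + 1 := by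
    unfold funf
    rw [← hFdef, ← hudef, hz2re, habs2, hu2re, hlogu]
  have hA : semiA t ^ 2 = (1 + t) / (1 - t) := by
    unfold semiA
    rw [Real.sq_sqrt (div_nonneg (by linarith) (by linarith))]
  have hB : semiB t ^ 2 = (1 - t) / (1 + t) := by
    unfold semiB
    rw [Real.sq_sqrt (div_nonneg (by linarith) (by linarith))]
  have h1t : ((1:ℝ) + t) ≠ 0 := by linarith
  have h2t : ((1:ℝ) - t) ≠ 0 := by linarith
  have hkey2 : (z.re ^ 2 / semiA t ^ 2 + z.im ^ 2 / semiB t ^ 2) * (1 - t ^ 2)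
      = z.re ^ 2 * (1 - t) ^ 2 + z.im ^ 2 * (1 + t) ^ 2 := by
    rw [hA, hB]
    field_simp
    ring
  have hcond : (z ∈ ellipseBd t) ↔
      z.re ^ 2 * (1 - t) ^ 2 + z.im ^ 2 * (1 + t) ^ 2 = 1 - t ^ 2 := by
    have hmem : (z ∈ ellipseBd t) ↔ z.re ^ 2 / semiA t ^ 2 + z.im ^ 2 / semiB t ^ 2 = 1 :=
      Iff.rfl
    rw [hmem]
    constructor
    · intro h
      rw [← hkey2, h, one_mul]
    · intro h
      have h2 : (z.re ^ 2 / semiA t ^ 2 + z.im ^ 2 / semiB t ^ 2) * (1 - t ^ 2)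
          = 1 * (1 - t ^ 2) := by rw [hkey2, one_mul]; exact h
      exact mul_right_cancel₀ ht2.ne' h2
  have hiden : ((1 - t ^ 2) - (z.re ^ 2 * (1 - t) ^ 2 + z.im ^ 2 * (1 + t) ^ 2))
        * ((p ^ 2 + q ^ 2) ^ 2 * (1 - t ^ 2))
      = ((p ^ 2 + q ^ 2) - t) * ((1 - t * (p ^ 2 + q ^ 2))
        * (p ^ 2 * (1 - t) ^ 2 + q ^ 2 * (1 + t) ^ 2)) := by
    linear_combination (-(1 - t) ^ 2) * hx' + (-(1 + t) ^ 2) * hy'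
  refine ⟨q, p ^ 2 + q ^ 2, hr0, hr1, ?_, ?_⟩
  · rw [hcond]
    constructor
    · intro hm
      rw [hm, sub_self, zero_mul] at hiden
      rcases mul_eq_zero.1 hiden.symm with h | h
      · exact sub_eq_zero.1 h
      · exact absurd h (mul_pos htr hBpos).ne'
    · intro hrt
      have h0 := hiden
      rw [hrt, sub_self, zero_mul] at h0
      have h1 := (mul_eq_zero.1 h0).resolve_right
        (show (t ^ 2 * (1 - t ^ 2)) ≠ 0 by positivity)
      exact (sub_eq_zero.1 h1).symm
  · rw [hfunf]
    have hsuf : t * (z.re ^ 2 - z.im ^ 2) - (z.re ^ 2 + z.im ^ 2) + (p ^ 2 - q ^ 2)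
        = -t * ((p ^ 2 + q ^ 2) + 1) ^ 2 / ((1 + t) * (p ^ 2 + q ^ 2)) + (p ^ 2 + q ^ 2)
          - 2 * q ^ 2 * ((p ^ 2 + q ^ 2) - t) ^ 2 / ((1 - t ^ 2) * (p ^ 2 + q ^ 2) ^ 2) := by
      have hD : (0:ℝ) < (1 - t ^ 2) * (p ^ 2 + q ^ 2) ^ 2 := by positivity
      have hRHS : -t * ((p ^ 2 + q ^ 2) + 1) ^ 2 / ((1 + t) * (p ^ 2 + q ^ 2)) + (p ^ 2 + q ^ 2)
          - 2 * q ^ 2 * ((p ^ 2 + q ^ 2) - t) ^ 2 / ((1 - t ^ 2) * (p ^ 2 + q ^ 2) ^ 2)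
          = (-t * (1 - t) * ((p ^ 2 + q ^ 2) + 1) ^ 2 * (p ^ 2 + q ^ 2)
            + (p ^ 2 + q ^ 2) ^ 3 * (1 - t ^ 2) - 2 * q ^ 2 * ((p ^ 2 + q ^ 2) - t) ^ 2)
            / ((1 - t ^ 2) * (p ^ 2 + q ^ 2) ^ 2) := by
        have h1 : ((1:ℝ) + t) ≠ 0 := by linarith
        have h2 : (p ^ 2 + q ^ 2) ≠ 0 := hr0.ne'
        have h3 : (1 - t ^ 2) ≠ 0 := ht2.ne'
        field_simp
        ring
      rw [hRHS, eq_div_iff hD.ne']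
      linear_combination (t - 1) * hx' + (-(t + 1)) * hy'
    rw [hsuf]
    ring

private lemma myGplus (t r : ℝ) (ht0 : 0 < t) (ht1 : t < 1) (hr0 : 0 < r) (hr1 : r < 1)
    (hne : r ≠ t) :
    -t * (r + 1) ^ 2 / ((1 + t) * r) + r - Real.log r + Real.log t + 1 < 0 := by
  have h1t : (0:ℝ) < 1 + t := by linarith
  have hlog : Real.log t - Real.log r = Real.log (t / r) := (Real.log_div ht0.ne' hr0.ne').symm
  have hstart : -t * (r + 1) ^ 2 / ((1 + t) * r) + r - Real.log r + Real.log t + 1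
      = Real.log (t / r) + (r + 1 - t * (r + 1) ^ 2 / ((1 + t) * r)) := by
    rw [← hlog]; ring
  rw [hstart]
  rcases lt_or_gt_of_ne hne with h | h
  · -- r < t : log (t/r) ≤ ((t/r)^2-1)/(2*(t/r))
    have hx1 : (1:ℝ) ≤ t / r := by rw [le_div_iff₀ hr0]; linarith
    have h1 := myLog2 hx1
    have h2 : ((t / r) ^ 2 - 1) / (2 * (t / r)) = (t ^ 2 - r ^ 2) / (2 * t * r) := by
      field_simp
    have h3 : (t ^ 2 - r ^ 2) / (2 * t * r) + (r + 1 - t * (r + 1) ^ 2 / ((1 + t) * r))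
        = -((t - r) ^ 2 * (1 - t)) / (2 * t * r * (1 + t)) := by
      field_simp
      ring
    have h4 : -((t - r) ^ 2 * (1 - t)) / (2 * t * r * (1 + t)) < 0 := by
      apply div_neg_of_neg_of_pos
      · have : 0 < (t - r) ^ 2 := pow_pos (by linarith) 2
        nlinarith
      · positivity
    rw [h2] at h1
    linarith
  · -- t < r : log (t/r) ≤ 2*((t/r)-1)/((t/r)+1)
    have hx0 : 0 < t / r := div_pos ht0 hr0
    have hx1 : t / r ≤ 1 := by rw [div_le_one hr0]; linarith
    have h1 := myLog1 hx0 hx1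
    have h2 : 2 * (t / r - 1) / (t / r + 1) = 2 * (t - r) / (t + r) := by
      have hr0' : r ≠ 0 := hr0.ne'
      have htr0 : t + r ≠ 0 := by positivity
      field_simp
    have h3 : 2 * (t - r) / (t + r) + (r + 1 - t * (r + 1) ^ 2 / ((1 + t) * r))
        = -((r - t) ^ 2 * (1 - r)) / (r * (t + r) * (1 + t)) := by
      field_simp
      ring
    have h4 : -((r - t) ^ 2 * (1 - r)) / (r * (t + r) * (1 + t)) < 0 := by
      apply div_neg_of_neg_of_pos
      · have h5 : 0 < (r - t) ^ 2 := pow_pos (by linarith) 2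
        nlinarith
      · positivity
    rw [h2] at h1
    linarith

private lemma myEllipseSeg (t : ℝ) (ht0 : 0 < t) (ht1 : t < 1) (z : ℂ)
    (hz : z ∈ ellipseBd t) : z ∉ segC (focF t) := by
  rintro ⟨him, hge, hle⟩
  have ht2 : 0 < 1 - t ^ 2 := by nlinarith
  have hA : semiA t ^ 2 = (1 + t) / (1 - t) := by
    unfold semiA
    rw [Real.sq_sqrt (div_nonneg (by linarith) (by linarith))]
  have hFc : focF t ^ 2 = 4 * t / (1 - t ^ 2) := by
    unfold focF
    rw [mul_pow, Real.sq_sqrt (le_of_lt (div_pos ht0 ht2))]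
    ring
  have hmem : z.re ^ 2 / semiA t ^ 2 + z.im ^ 2 / semiB t ^ 2 = 1 := hz
  rw [him] at hmem
  simp only [ne_eq, OfNat.ofNat_ne_zero, not_false_eq_true, zero_pow, zero_div,
    add_zero] at hmem
  rw [hA, div_eq_one_iff_eq (ne_of_gt (div_pos (by linarith) (by linarith)))] at hmem
  -- z.re^2 = (1+t)/(1-t), but z.re^2 ≤ F^2 = 4t/(1-t^2)
  have hsq : z.re ^ 2 ≤ focF t ^ 2 := by
    have h0 : 0 ≤ focF t := by unfold focF; positivity
    nlinarith
  rw [hFc, hmem] at hsq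
  rw [div_le_div_iff₀ (by linarith) ht2] at hsq
  nlinarith [pow_pos (show (0:ℝ) < 1 - t by linarith) 3]


/-- `f` vanishes on the ellipse `∂E_t` and is strictly negative off
`∂E_t ∪ [−F,F]`. -/
theorem stmt10 (t : ℝ) (ht0 : 0 < t) (ht1 : t < 1) :
    (∀ z ∈ ellipseBd t, funf t z = 0) ∧
    (∀ z : ℂ, z ∉ ellipseBd t → z ∉ segC (focF t) → funf t z < 0) := by
  have ht2 : 0 < 1 - t ^ 2 := by nlinarith
  constructor
  · intro z hmem
    obtain ⟨q, r, hr0, hr1, hiff, hform⟩ :=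
      myCore t ht0 ht1 z (myEllipseSeg t ht0 ht1 z hmem)
    have hrt : r = t := hiff.1 hmem
    rw [hform, hrt]
    have h1 : -t * (t + 1) ^ 2 / ((1 + t) * t) = -(1 + t) := by
      rw [div_eq_iff (by positivity)]
      ring
    rw [h1, sub_self]
    simp
  · intro z hnm hseg
    obtain ⟨q, r, hr0, hr1, hiff, hform⟩ := myCore t ht0 ht1 z hseg
    have hne : r ≠ t := fun h => hnm (hiff.2 h)
    rw [hform]
    have h1 := myGplus t r ht0 ht1 hr0 hr1 hne
    have h2 : 0 ≤ 2 * q ^ 2 * (r - t) ^ 2 / ((1 - t ^ 2) * r ^ 2) := by positivity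
    linarith
end

section
/- Let t ∈ ℝ with 0 < t < 1, F = 2√(t/(1−t²)), and define h₁(z) = 2·U_F(z)/F + t·z − conj(z) on ℂ ∖ [−F,F]. Then h₁(z₀) = 0 for every z₀ ∈ ∂E_t (and consequently also h₁(conj z₀) = 0 for every z₀ ∈ ∂E_t). -/
open scoped Classical

/-- `h₁(z) = 2·U_F(z)/F + t·z − conj z` with `F = 2√(t/(1−t²))`. -/
noncomputable def hOne (t : ℝ) (z : ℂ) : ℂ :=
  2 * funU (focF t) z / (focF t : ℂ) + (t : ℂ) * z - (starRingEnd ℂ) z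

lemma sqrt_sq_of_Cplus {s : ℂ} (h : 0 < s.re ∨ (s.re = 0 ∧ 0 ≤ s.im)) :
    (s ^ 2) ^ ((1 : ℂ) / 2) = s := by
  rcases eq_or_ne s 0 with rfl | hs
  · simp [Complex.zero_cpow (by norm_num : (1:ℂ)/2 ≠ 0)]
  have h1 : -(Real.pi / 2) < s.arg := by
    rw [Complex.neg_pi_div_two_lt_arg_iff]
    rcases h with h | ⟨h, h'⟩
    · exact Or.inl h
    · exact Or.inr h'
  have h2 : s.arg ≤ Real.pi / 2 := by
    rw [Complex.arg_le_pi_div_two_iff]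
    rcases h with h | ⟨h, _⟩
    · exact Or.inl h.le
    · exact Or.inl h.ge
  have := Complex.pow_cpow_nat_inv (x := s) (n := 2) (by norm_num)
    (by push_cast; linarith) (by push_cast; linarith)
  rw [one_div]
  norm_num at this ⊢
  exact this

set_option maxHeartbeats 1600000 in
lemma hOne_vanish (t : ℝ) (ht0 : 0 < t) (ht1 : t < 1) :
    ∀ z ∈ ellipseBd t, hOne t z = 0 := by
  intro z hz
  have ht1' : (0:ℝ) < 1 - t := by linarith
  have ht2 : (0:ℝ) < 1 + t := by linarith
  have hc0 : (0:ℝ) < 1 - t^2 := by nlinarith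
  obtain ⟨a, ha_def⟩ : ∃ a, a = semiA t := ⟨_, rfl⟩
  obtain ⟨b, hb_def⟩ : ∃ b, b = semiB t := ⟨_, rfl⟩
  obtain ⟨F, hF_def⟩ : ∃ F, F = focF t := ⟨_, rfl⟩
  obtain ⟨c, hc_def⟩ : ∃ c, c = Real.sqrt (1 - t^2) := ⟨_, rfl⟩
  have hc : 0 < c := hc_def ▸ Real.sqrt_pos.mpr hc0
  have hc2 : c^2 = 1 - t^2 := hc_def ▸ Real.sq_sqrt hc0.le
  have ha : 0 < a := ha_def ▸ Real.sqrt_pos.mpr (by positivity)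
  have hb : 0 < b := hb_def ▸ Real.sqrt_pos.mpr (by positivity)
  have ha2 : a^2 = (1+t)/(1-t) := ha_def ▸ Real.sq_sqrt (by positivity)
  have hb2 : b^2 = (1-t)/(1+t) := hb_def ▸ Real.sq_sqrt (by positivity)
  have hF2 : F^2 = 4*t/(1-t^2) := by
    rw [hF_def, focF, mul_pow, Real.sq_sqrt (by positivity)]
    ring
  have hF : 0 < F := by
    rw [hF_def, focF]
    positivity
  have hFC : (F : ℂ) ≠ 0 := by exact_mod_cast hF.ne'
  have sqkey : ∀ X : ℝ, 0 ≤ X → X^2 = c^2 → X = c := by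
    intro X hX h
    rw [← Real.sqrt_sq hX, h, Real.sqrt_sq hc.le]
  have e1 : (1-t)*a = c := by
    apply sqkey _ (by positivity)
    rw [mul_pow, ha2, hc2]
    field_simp
    ring
  have e2 : (1+t)*b = c := by
    apply sqkey _ (by positivity)
    rw [mul_pow, hb2, hc2]
    field_simp
    ring
  have e3 : 2*(a-b) = c * F^2 := by
    have ha' : a = c/(1-t) := by rw [← e1]; field_simp
    have hb' : b = c/(1+t) := by rw [← e2]; field_simp
    rw [ha', hb', hF2, show (1:ℝ) - t^2 = (1-t)*(1+t) by ring]
    field_simp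
    ring
  have hab : a^2 - b^2 = F^2 := by
    rw [ha2, hb2, hF2]
    field_simp
    ring
  -- coordinates
  obtain ⟨x, y, rfl⟩ : ∃ x y : ℝ, z = ↑x + ↑y * Complex.I :=
    ⟨z.re, z.im, (Complex.re_add_im z).symm⟩
  have hz' : x^2 / a^2 + y^2 / b^2 = 1 := by
    rw [ha_def, hb_def]
    simpa [ellipseBd] using hz
  obtain ⟨u, hx⟩ : ∃ u, x = a * u := ⟨x/a, by field_simp⟩
  obtain ⟨v, hy⟩ : ∃ v, y = b * v := ⟨y/b, by field_simp⟩
  have huv : u^2 + v^2 = 1 := by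
    rw [hx, hy] at hz'
    rw [← hz']
    field_simp
  obtain ⟨s, hs_def⟩ : ∃ s : ℂ, s = (↑(b*u) : ℂ) + (↑(a*v) : ℂ) * Complex.I := ⟨_, rfl⟩
  have hre' : ((↑x : ℂ) + (↑y : ℂ) * Complex.I).re = x := by simp
  have him' : ((↑x : ℂ) + (↑y : ℂ) * Complex.I).im = y := by simp
  have hsre : s.re = b*u := by simp [hs_def]
  have hsim : s.im = a*v := by simp [hs_def]
  have hzs : ((↑x : ℂ) + (↑y : ℂ) * Complex.I)^2 - (F:ℂ)^2 = s^2 := by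
    rw [hs_def, Complex.ext_iff]
    constructor
    · simp only [Complex.sub_re, Complex.add_re, Complex.mul_re, Complex.mul_im,
        Complex.add_im, Complex.ofReal_re, Complex.ofReal_im, Complex.I_re, Complex.I_im,
        pow_two, Complex.sub_im]
      rw [hx, hy]
      linear_combination (u^2+v^2)*hab + F^2*huv
    · simp only [Complex.sub_re, Complex.add_re, Complex.mul_re, Complex.mul_im,
        Complex.add_im, Complex.ofReal_re, Complex.ofReal_im, Complex.I_re, Complex.I_im,
        pow_two, Complex.sub_im]
      rw [hx, hy]
      ring
  -- branch analysis
  have hU : funU F ((↑x : ℂ) + (↑y : ℂ) * Complex.I) = (((↑x : ℂ) + (↑y : ℂ) * Complex.I) - s) / F := by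
    by_cases hzp : ((↑x : ℂ) + (↑y : ℂ) * Complex.I) ∈ Cplus
    all_goals have hzp0 := hzp
    · have hsc : 0 < s.re ∨ (s.re = 0 ∧ 0 ≤ s.im) := by
        rw [hsre, hsim]
        rw [Cplus, Set.mem_setOf_eq, hre', him'] at hzp
        rcases hzp with h | ⟨h, h'⟩
        · left
          have h' : 0 < a * u := by rw [← hx]; exact h
          have hu0 : 0 < u := by clear * - h' ha; nlinarith
          exact mul_pos hb hu0
        · right
          have h2 : a * u = 0 := by rw [← hx]; exact h
          have hu0 : u = 0 := by
            rcases mul_eq_zero.mp h2 with h3 | h3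
            · exact absurd h3 ha.ne'
            · exact h3
          have h3 : 0 ≤ b * v := by rw [← hy]; exact h'
          have hv0 : 0 ≤ v := by clear * - h3 hb; nlinarith
          exact ⟨by rw [hu0]; ring, by positivity⟩
      rw [funU, if_pos hzp, hzs, sqrt_sq_of_Cplus hsc]
    · rw [Cplus, Set.mem_setOf_eq, hre', him'] at hzp
      push_neg at hzp
      have hxle : x ≤ 0 := hzp.1
      have hsc : 0 < (-s).re ∨ ((-s).re = 0 ∧ 0 ≤ (-s).im) := by
        simp only [Complex.neg_re, Complex.neg_im, hsre, hsim]
        rcases lt_or_eq_of_le hxle with h | h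
        · left
          have h' : a * u < 0 := by rw [← hx]; exact h
          have hu0 : u < 0 := by clear * - h' ha; nlinarith
          exact neg_pos.mpr (mul_neg_of_pos_of_neg hb hu0)
        · right
          have hy0 : y < 0 := hzp.2 h
          have h2 : a * u = 0 := by rw [← hx]; exact h
          have hu0 : u = 0 := by
            rcases mul_eq_zero.mp h2 with h3 | h3
            · exact absurd h3 ha.ne'
            · exact h3
          have h3 : b * v < 0 := by rw [← hy]; exact hy0
          have hv0 : v < 0 := by clear * - h3 hb; nlinarith
          exact ⟨by rw [hu0]; ring,
            neg_nonneg.mpr (mul_neg_of_pos_of_neg ha hv0).le⟩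
      have hsq : (((↑x : ℂ) + (↑y : ℂ) * Complex.I)^2 - (F:ℂ)^2) ^ ((1:ℂ)/2) = -s := by
        rw [hzs, show s^2 = (-s)^2 by ring, sqrt_sq_of_Cplus hsc]
      rw [funU, if_neg hzp0, hsq]
      ring
  have hre : 2*(x - b*u) + (t-1)*x*F^2 = 0 := by
    rw [hx]
    linear_combination u * e3 - u * F^2 * e1
  have him : 2*(y - a*v) + (t+1)*y*F^2 = 0 := by
    rw [hy]
    linear_combination -v * e3 + v * F^2 * e2
  have hcz : (starRingEnd ℂ) ((↑x : ℂ) + (↑y : ℂ) * Complex.I)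
      = (↑x : ℂ) - (↑y : ℂ) * Complex.I := by
    simp
    ring
  have key : hOne t ((↑x : ℂ) + (↑y : ℂ) * Complex.I) * (F:ℂ)^2 =
      Complex.ofReal (2*(x - b*u) + (t-1)*x*F^2)
        + Complex.ofReal (2*(y - a*v) + (t+1)*y*F^2) * Complex.I := by
    rw [hOne, ← hF_def, hU, hcz, hs_def]
    push_cast
    field_simp
    ring
  rw [hre, him] at key
  simp only [Complex.ofReal_zero, zero_mul, add_zero, zero_add] at key
  exact (mul_eq_zero.mp key).resolve_right (pow_ne_zero 2 hFC)


/-- `h₁` vanishes on the ellipse `∂E_t`, and also at the conjugates of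
points of `∂E_t`. -/
theorem stmt12 (t : ℝ) (ht0 : 0 < t) (ht1 : t < 1) :
    ∀ z₀ ∈ ellipseBd t, hOne t z₀ = 0 ∧ hOne t ((starRingEnd ℂ) z₀) = 0 := by
  intro z₀ hz₀
  have hconj : (starRingEnd ℂ) z₀ ∈ ellipseBd t := by
    simpa only [ellipseBd, Set.mem_setOf_eq, Complex.conj_re, Complex.conj_im, neg_sq]
      using hz₀
  exact ⟨hOne_vanish t ht0 ht1 z₀ hz₀, hOne_vanish t ht0 ht1 _ hconj⟩
end

section
/- Let t ∈ ℝ with 0 < t < 1 and F = 2√(t/(1−t²)). On ℂ ∖ [−F,F] define g₊(z) = −((1−t)/(2√t))·Re(U_F(z))·|W_F(z)|², g₋(z) = −((1+t)/(2√t))·Im(U_F(z))·|W_F(z)|², g_w(z) = (g₊(z) − i·g₋(z))/2, g_z(z) = (g₊(z) + i·g₋(z))/2, and h₂(z) = t/2 − U_F(z)/(F·T_F(z)). Then for every φ ∈ (−π, π], at the point z₀ = a_t·cos φ + i·b_t·sin φ of ∂E_t: |2·h₂(z₀)| = |g_w(z₀)| = |g_z(z₀)| = 1, g_w(z₀) =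 −(e^{iφ} − t·e^{−iφ})/√(1+t²−2t·cos 2φ), and g_z(z₀) = −(e^{−iφ} − t·e^{iφ})/√(1+t²−2t·cos 2φ). -/
open scoped Classical

/-- `g₊(z) = −((1−t)/(2√t))·Re(U_F(z))·|W_F(z)|²` with `F = 2√(t/(1−t²))`. -/
noncomputable def gPlus (t : ℝ) (z : ℂ) : ℝ :=
  -((1 - t) / (2 * Real.sqrt t)) * (funU (focF t) z).re * ‖funW (focF t) z‖ ^ 2

/-- `g₋(z) = −((1+t)/(2√t))·Im(U_F(z))·|W_F(z)|²` with `F = 2√(t/(1−t²))`. -/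
noncomputable def gMinus (t : ℝ) (z : ℂ) : ℝ :=
  -((1 + t) / (2 * Real.sqrt t)) * (funU (focF t) z).im * ‖funW (focF t) z‖ ^ 2

/-- `g_w(z) = (g₊(z) − i·g₋(z))/2`. -/
noncomputable def gW (t : ℝ) (z : ℂ) : ℂ :=
  ((gPlus t z : ℝ) - Complex.I * (gMinus t z : ℝ)) / 2

/-- `g_z(z) = (g₊(z) + i·g₋(z))/2`. -/
noncomputable def gZ (t : ℝ) (z : ℂ) : ℂ :=
  ((gPlus t z : ℝ) + Complex.I * (gMinus t z : ℝ)) / 2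

/-- `h₂(z) = t/2 − U_F(z)/(F·T_F(z))` with `F = 2√(t/(1−t²))`. -/
noncomputable def hTwo (t : ℝ) (z : ℂ) : ℂ :=
  (t : ℂ) / 2 - funU (focF t) z / ((focF t : ℂ) * funT (focF t) z)

open Complex in
lemma cpow_half_sq {w : ℂ} (hw : 0 < w.re ∨ (w.re = 0 ∧ 0 ≤ w.im)) :
    (w ^ 2) ^ ((1 : ℂ) / 2) = w := by
  have h1 : -(Real.pi / 2) < w.arg :=
    neg_pi_div_two_lt_arg_iff.2 (hw.imp id fun h => h.2)
  have h2 : w.arg ≤ Real.pi / 2 :=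
    arg_le_pi_div_two_iff.2 (.inl (hw.elim le_of_lt fun h => h.1.ge))
  have h := Complex.pow_cpow_ofNat_inv (n := 2) h1 h2
  rw [one_div]
  exact_mod_cast h

lemma sq_eq_of_nonneg {x y : ℝ} (hx : 0 ≤ x) (hy : 0 ≤ y) (h : x ^ 2 = y ^ 2) : x = y := by
  nlinarith [sq_nonneg (x - y), sq_nonneg (x + y)]

set_option maxHeartbeats 2000000 in
/-- on the ellipse `∂E_t`, at `z₀ = a_t·cos φ + i·b_t·sin φ` one has
`|2h₂(z₀)| = |g_w(z₀)| = |g_z(z₀)| = 1`,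
`g_w(z₀) = −(e^{iφ} − t·e^{−iφ})/√(1+t²−2t·cos 2φ)` and
`g_z(z₀) = −(e^{−iφ} − t·e^{iφ})/√(1+t²−2t·cos 2φ)`. -/
theorem stmt13 (t : ℝ) (ht0 : 0 < t) (ht1 : t < 1) (φ : ℝ)
    (hφ : φ ∈ Set.Ioc (-Real.pi) Real.pi) (z₀ : ℂ)
    (hz₀ : z₀ = (semiA t * Real.cos φ : ℝ) + Complex.I * (semiB t * Real.sin φ : ℝ)) :
    ‖2 * hTwo t z₀‖ = 1 ∧
    ‖gW t z₀‖ = 1 ∧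
    ‖gZ t z₀‖ = 1 ∧
    gW t z₀ = -((Complex.exp (Complex.I * φ) - (t : ℂ) * Complex.exp (-(Complex.I * φ))) /
      (Real.sqrt (1 + t ^ 2 - 2 * t * Real.cos (2 * φ)) : ℂ)) ∧
    gZ t z₀ = -((Complex.exp (-(Complex.I * φ)) - (t : ℂ) * Complex.exp (Complex.I * φ)) /
      (Real.sqrt (1 + t ^ 2 - 2 * t * Real.cos (2 * φ)) : ℂ)) := by
  have h1t : (0:ℝ) < 1 - t := by linarith
  have h1t' : (0:ℝ) < 1 + t := by linarith
  have h1t2 : (0:ℝ) < 1 - t ^ 2 := by nlinarith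
  set s : ℝ := Real.sqrt t with hs_def
  set u : ℝ := Real.sqrt (1 - t ^ 2) with hu_def
  have hs : 0 < s := Real.sqrt_pos.2 ht0
  have hu : 0 < u := Real.sqrt_pos.2 h1t2
  have hs2 : s ^ 2 = t := Real.sq_sqrt ht0.le
  have hu2 : u ^ 2 = 1 - t ^ 2 := Real.sq_sqrt h1t2.le
  have hs1 : s < 1 := by nlinarith
  have hsc : ((s : ℝ) : ℂ) ^ 2 = (t : ℂ) := by rw [← Complex.ofReal_pow, hs2]
  have huc : ((u : ℝ) : ℂ) ^ 2 = 1 - (t : ℂ) ^ 2 := by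
    rw [← Complex.ofReal_pow, hu2]; push_cast; ring
  have hs0 : ((s : ℝ) : ℂ) ≠ 0 := Complex.ofReal_ne_zero.2 hs.ne'
  have hu0 : ((u : ℝ) : ℂ) ≠ 0 := Complex.ofReal_ne_zero.2 hu.ne'
  -- F = 2 s / u
  have hFr : focF t = 2 * s / u := by
    rw [focF, hs_def, hu_def, Real.sqrt_div ht0.le]; ring
  have hFc : ((focF t : ℝ) : ℂ) = 2 * (s : ℂ) / (u : ℂ) := by
    rw [hFr]; push_cast; ring
  have hF0 : ((focF t : ℝ) : ℂ) ≠ 0 :=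
    Complex.ofReal_ne_zero.2 (by rw [hFr]; positivity)
  -- semi-axes
  have hA : semiA t = (1 + t) / u := by
    rw [semiA, hu_def]
    rw [show (1 + t) / (1 - t) = (1 + t) ^ 2 / (1 - t ^ 2) by field_simp; ring]
    rw [Real.sqrt_div (by positivity), Real.sqrt_sq h1t'.le]
  have hB : semiB t = (1 - t) / u := by
    rw [semiB, hu_def]
    rw [show (1 - t) / (1 + t) = (1 - t) ^ 2 / (1 - t ^ 2) by field_simp; ring]
    rw [Real.sqrt_div (by positivity), Real.sqrt_sq h1t.le]
  have hApos : 0 < semiA t := by rw [hA]; positivity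
  have hBpos : 0 < semiB t := by rw [hB]; positivity
  -- exponentials
  set E : ℂ := Complex.exp (Complex.I * φ) with hE_def
  set E' : ℂ := Complex.exp (-(Complex.I * φ)) with hE'_def
  have hE : E = (Real.cos φ : ℂ) + (Real.sin φ : ℂ) * Complex.I := by
    rw [hE_def, mul_comm, Complex.exp_mul_I]
    simp [Complex.ofReal_cos, Complex.ofReal_sin]
  have hE' : E' = (Real.cos φ : ℂ) - (Real.sin φ : ℂ) * Complex.I := by
    rw [hE'_def, show -(Complex.I * (φ:ℂ)) = ((-φ : ℝ) : ℂ) * Complex.I by push_cast; ring,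
      Complex.exp_mul_I]
    simp [Complex.ofReal_cos, Complex.ofReal_sin, Complex.cos_neg, Complex.sin_neg]
    ring
  have hEE' : E * E' = 1 := by
    rw [hE_def, hE'_def, ← Complex.exp_add]; simp
  -- z₀ in exponential form
  have hre : z₀.re = semiA t * Real.cos φ := by
    rw [hz₀]
    simp only [Complex.add_re, Complex.ofReal_re, Complex.mul_re, Complex.I_re,
      Complex.I_im, Complex.ofReal_im]
    ring
  have him : z₀.im = semiB t * Real.sin φ := by
    rw [hz₀]
    simp only [Complex.add_im, Complex.ofReal_im, Complex.mul_im, Complex.I_re,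
      Complex.I_im, Complex.ofReal_re]
    ring
  have hz : z₀ = (E + (t : ℂ) * E') / (u : ℂ) := by
    rw [hz₀, hA, hB, hE, hE']
    push_cast
    field_simp
    ring
  -- S
  set S : ℂ := (((1 - t) * Real.cos φ / u : ℝ) : ℂ) +
      (((1 + t) * Real.sin φ / u : ℝ) : ℂ) * Complex.I with hS_def
  have hSre : S.re = (1 - t) * Real.cos φ / u := by
    rw [hS_def]
    simp only [Complex.add_re, Complex.ofReal_re, Complex.mul_re, Complex.I_re,
      Complex.I_im, Complex.ofReal_im]
    ring
  have hSim : S.im = (1 + t) * Real.sin φ / u := by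
    rw [hS_def]
    simp only [Complex.add_im, Complex.ofReal_im, Complex.mul_im, Complex.I_re,
      Complex.I_im, Complex.ofReal_re]
    ring
  have hSalt : S = (E - (t : ℂ) * E') / (u : ℂ) := by
    rw [hS_def, hE, hE']; push_cast; field_simp; ring
  have hzsq : z₀ ^ 2 - ((focF t : ℝ) : ℂ) ^ 2 = S ^ 2 := by
    rw [hz, hFc, hSalt]
    field_simp
    linear_combination (4 * (t : ℂ)) * hEE' - 4 * hsc
  -- branch analysis: funT and funU at z₀
  have hTU : funT (focF t) z₀ = S ∧ funU (focF t) z₀ = (z₀ - S) / ((focF t : ℝ) : ℂ) := by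
    by_cases hc : 0 < Real.cos φ ∨ (Real.cos φ = 0 ∧ 0 ≤ Real.sin φ)
    · have hC : z₀ ∈ Cplus := by
        simp only [Cplus, Set.mem_setOf_eq, hre, him]
        rcases hc with h | ⟨h1, h2⟩
        · exact .inl (mul_pos hApos h)
        · exact .inr ⟨by rw [h1, mul_zero], mul_nonneg hBpos.le h2⟩
      have hScond : 0 < S.re ∨ (S.re = 0 ∧ 0 ≤ S.im) := by
        rw [hSre, hSim]
        rcases hc with h | ⟨h1, h2⟩
        · exact .inl (by positivity)
        · exact .inr ⟨by rw [h1]; ring, by positivity⟩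
      have hsq : (S ^ 2) ^ ((1 : ℂ) / 2) = S := cpow_half_sq hScond
      constructor
      · rw [funT, if_pos hC, hzsq, hsq]
      · rw [funU, if_pos hC, hzsq, hsq]
    · push_neg at hc
      have hC : z₀ ∉ Cplus := by
        simp only [Cplus, Set.mem_setOf_eq, hre, him]
        push_neg
        constructor
        · nlinarith [hc.1]
        · intro h0
          have hcos : Real.cos φ = 0 := by
            rcases mul_eq_zero.1 h0 with h | h
            · exact absurd h hApos.ne'
            · exact h
          exact mul_neg_of_pos_of_neg hBpos (hc.2 hcos)
      have hScond : 0 < (-S).re ∨ ((-S).re = 0 ∧ 0 ≤ (-S).im) := by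
        simp only [Complex.neg_re, Complex.neg_im, hSre, hSim]
        rcases lt_or_eq_of_le hc.1 with h | h
        · left
          have : (1 - t) * Real.cos φ / u < 0 := by
            apply div_neg_of_neg_of_pos _ hu
            exact mul_neg_of_pos_of_neg h1t h
          linarith
        · right
          have hsin := hc.2 h
          constructor
          · rw [h]; ring
          · have : (1 + t) * Real.sin φ / u < 0 := by
              apply div_neg_of_neg_of_pos _ hu
              exact mul_neg_of_pos_of_neg h1t' hsin
            linarith
      have hsq : (S ^ 2) ^ ((1 : ℂ) / 2) = -S := by
        have h := cpow_half_sq hScond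
        rwa [neg_sq] at h
      constructor
      · rw [funT, if_neg hC, hzsq, hsq, neg_neg]
      · rw [funU, if_neg hC, hzsq, hsq, ← sub_eq_add_neg]
  have hT : funT (focF t) z₀ = S := hTU.1
  have hUval : funU (focF t) z₀ = (s : ℂ) * E' := by
    rw [hTU.2, hz, hSalt, hFc]
    field_simp
    linear_combination (-2 * E') * hsc
  have reSimp : ∀ (a b c : ℝ), ((a:ℂ) * ((b:ℂ) - (c:ℂ) * Complex.I)).re = a * b := by
    intro a b c
    simp only [Complex.mul_re, Complex.sub_re, Complex.sub_im, Complex.ofReal_re,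
      Complex.ofReal_im, Complex.mul_re, Complex.mul_im, Complex.I_re, Complex.I_im]
    ring
  have imSimp : ∀ (a b c : ℝ), ((a:ℂ) * ((b:ℂ) - (c:ℂ) * Complex.I)).im = -(a * c) := by
    intro a b c
    simp only [Complex.mul_im, Complex.sub_re, Complex.sub_im, Complex.ofReal_re,
      Complex.ofReal_im, Complex.mul_re, Complex.mul_im, Complex.I_re, Complex.I_im]
    ring
  have hUre : (funU (focF t) z₀).re = s * Real.cos φ := by
    rw [hUval, hE', reSimp]
  have hUim : (funU (focF t) z₀).im = -(s * Real.sin φ) := by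
    rw [hUval, hE', imSimp]
  -- D
  set Dr : ℝ := Real.sqrt (1 + t ^ 2 - 2 * t * Real.cos (2 * φ)) with hDr_def
  have hDarg : (0:ℝ) < 1 + t ^ 2 - 2 * t * Real.cos (2 * φ) := by
    nlinarith [Real.cos_le_one (2 * φ), Real.neg_one_le_cos (2 * φ)]
  have hDr0 : 0 < Dr := Real.sqrt_pos.2 hDarg
  have hDr2 : Dr ^ 2 = 1 + t ^ 2 - 2 * t * Real.cos (2 * φ) := Real.sq_sqrt hDarg.le
  have hcos2 : Real.cos (2 * φ) = 2 * Real.cos φ ^ 2 - 1 := Real.cos_two_mul φ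
  have hsin2 : Real.sin φ ^ 2 = 1 - Real.cos φ ^ 2 := Real.sin_sq φ
  -- half-angle exponentials
  set e2 : ℂ := Complex.exp (Complex.I * (φ / 2 : ℝ)) with he2_def
  set e2' : ℂ := Complex.exp (-(Complex.I * (φ / 2 : ℝ))) with he2'_def
  have he2e2' : e2 * e2' = 1 := by rw [he2_def, he2'_def, ← Complex.exp_add]; simp
  have he2sq : e2 ^ 2 = E := by
    rw [he2_def, hE_def, sq, ← Complex.exp_add]
    congr 1; push_cast; ring
  have he2'sq : e2' ^ 2 = E' := by
    rw [he2'_def, hE'_def, sq, ← Complex.exp_add]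
    congr 1; push_cast; ring
  have hce2 : (starRingEnd ℂ) e2 = e2' := by
    rw [he2_def, he2'_def, ← Complex.exp_conj]
    congr 1
    rw [map_mul, Complex.conj_I, Complex.conj_ofReal]
    ring
  have hce2' : (starRingEnd ℂ) e2' = e2 := by
    rw [he2_def, he2'_def, ← Complex.exp_conj]
    congr 1
    rw [map_neg, map_mul, Complex.conj_I, Complex.conj_ofReal]
    ring
  set qA : ℂ := e2 + (s : ℂ) * e2' with hqA_def
  set qB : ℂ := e2 - (s : ℂ) * e2' with hqB_def
  have hEpE' : E + E' = 2 * (Real.cos φ : ℂ) := by rw [hE, hE']; ring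
  have hEmE' : E - E' = 2 * (Real.sin φ : ℂ) * Complex.I := by rw [hE, hE']; ring
  have hcqA : (starRingEnd ℂ) qA = e2' + (s : ℂ) * e2 := by
    rw [hqA_def]; simp [hce2, hce2', Complex.conj_ofReal]
  have hcqB : (starRingEnd ℂ) qB = e2' - (s : ℂ) * e2 := by
    rw [hqB_def]; simp [hce2, hce2', Complex.conj_ofReal]
  have hnA : (Complex.normSq qA : ℂ) = ((1 + t + 2 * s * Real.cos φ : ℝ) : ℂ) := by
    rw [← Complex.mul_conj, hcqA, hqA_def, Complex.ofReal_add, Complex.ofReal_add,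
      Complex.ofReal_mul, Complex.ofReal_mul, Complex.ofReal_one, Complex.ofReal_ofNat]
    linear_combination (1 + (s:ℂ)^2) * he2e2' + (s:ℂ) * he2sq + (s:ℂ) * he2'sq +
      (s:ℂ) * hEpE' + hsc
  have hnB : (Complex.normSq qB : ℂ) = ((1 + t - 2 * s * Real.cos φ : ℝ) : ℂ) := by
    rw [← Complex.mul_conj, hcqB, hqB_def, Complex.ofReal_sub, Complex.ofReal_add,
      Complex.ofReal_mul, Complex.ofReal_mul, Complex.ofReal_one, Complex.ofReal_ofNat]
    linear_combination (1 + (s:ℂ)^2) * he2e2' - (s:ℂ) * he2sq - (s:ℂ) * he2'sq -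
      (s:ℂ) * hEpE' + hsc
  have hABc : qA * (starRingEnd ℂ) qB =
      ((1 - t : ℝ) : ℂ) - ((2 * s * Real.sin φ : ℝ) : ℂ) * Complex.I := by
    rw [hcqB, hqA_def, Complex.ofReal_sub, Complex.ofReal_mul, Complex.ofReal_mul,
      Complex.ofReal_one, Complex.ofReal_ofNat]
    linear_combination (1 - (s:ℂ)^2) * he2e2' - (s:ℂ) * he2sq + (s:ℂ) * he2'sq -
      (s:ℂ) * hEmE' - hsc
  have hnAr : Complex.normSq qA = 1 + t + 2 * s * Real.cos φ := by exact_mod_cast hnA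
  have hnBr : Complex.normSq qB = 1 + t - 2 * s * Real.cos φ := by exact_mod_cast hnB
  have hcosb := Real.neg_one_le_cos φ
  have hcosb' := Real.cos_le_one φ
  have hprod1 : 0 ≤ 2 * s * (Real.cos φ + 1) := by
    apply mul_nonneg (by positivity)
    linarith only [hcosb]
  have hprod2 : 0 ≤ 2 * s * (1 - Real.cos φ) := by
    apply mul_nonneg (by positivity)
    linarith only [hcosb']
  have hs1' : (0:ℝ) < 1 - s := by linarith only [hs1]
  have hsqpos : 0 < (1 - s) ^ 2 := pow_pos hs1' 2
  have hsqexp : (1 - s) ^ 2 = 1 - 2 * s + s ^ 2 := by ring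
  have hnApos : 0 < Complex.normSq qA := by
    rw [hnAr]
    linarith only [hsqpos, hsqexp, hprod1, hs2]
  have hnBpos : 0 < Complex.normSq qB := by
    rw [hnBr]
    linarith only [hsqpos, hsqexp, hprod2, hs2]
  have hqA0 : qA ≠ 0 := Complex.normSq_pos.1 hnApos
  have hqB0 : qB ≠ 0 := Complex.normSq_pos.1 hnBpos
  have hABre : (qA * (starRingEnd ℂ) qB).re = 1 - t := by
    rw [hABc]
    simp only [Complex.sub_re, Complex.ofReal_re, Complex.mul_re, Complex.I_re,
      Complex.I_im, Complex.ofReal_im]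
    ring
  have hvre : 0 < (qA / qB).re := by
    rw [Complex.div_re]
    have h1 : qA.re * qB.re + qA.im * qB.im = 1 - t := by
      have h2 := hABre
      rw [Complex.mul_re, Complex.conj_re, Complex.conj_im] at h2
      linarith only [h2]
    have h3 : qA.re * qB.re / Complex.normSq qB + qA.im * qB.im / Complex.normSq qB
        = (1 - t) / Complex.normSq qB := by
      rw [← add_div, h1]
    rw [h3]; positivity
  have hqAsq : qA ^ 2 = E + 2 * (s:ℂ) + (t:ℂ) * E' := by
    rw [hqA_def]
    linear_combination he2sq + 2 * (s:ℂ) * he2e2' + (s:ℂ)^2 * he2'sq + E' * hsc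
  have hqBsq : qB ^ 2 = E - 2 * (s:ℂ) + (t:ℂ) * E' := by
    rw [hqB_def]
    linear_combination he2sq - 2 * (s:ℂ) * he2e2' + (s:ℂ)^2 * he2'sq + E' * hsc
  have hzpF : z₀ + ((focF t : ℝ) : ℂ) = qA ^ 2 / (u : ℂ) := by
    rw [hz, hFc, hqAsq]
    field_simp
    ring
  have hzmF : z₀ - ((focF t : ℝ) : ℂ) = qB ^ 2 / (u : ℂ) := by
    rw [hz, hFc, hqBsq]
    field_simp
    ring
  have hr : (z₀ + ((focF t : ℝ) : ℂ)) / (z₀ - ((focF t : ℝ) : ℂ)) = (qA / qB) ^ 2 := by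
    rw [hzpF, hzmF]
    field_simp
  have hr0 : (z₀ + ((focF t : ℝ) : ℂ)) / (z₀ - ((focF t : ℝ) : ℂ)) ≠ 0 := by
    rw [hr]
    exact pow_ne_zero _ (div_ne_zero hqA0 hqB0)
  set q : ℂ := ((z₀ + ((focF t : ℝ) : ℂ)) / (z₀ - ((focF t : ℝ) : ℂ))) ^ ((1 : ℂ) / 4)
    with hq_def
  have hq2 : q ^ 2 = qA / qB := by
    have h1 : q ^ 2 = ((z₀ + ((focF t : ℝ) : ℂ)) / (z₀ - ((focF t : ℝ) : ℂ))) ^ ((1 : ℂ) / 2) := by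
      rw [hq_def, sq, ← Complex.cpow_add _ _ hr0]
      norm_num
    rw [h1, hr]
    exact cpow_half_sq (Or.inl hvre)
  have hq0 : q ≠ 0 := by
    intro h
    apply div_ne_zero hqA0 hqB0
    rw [← hq2, h]
    ring
  have harg : ((z₀ + ((focF t : ℝ) : ℂ)) / (z₀ - ((focF t : ℝ) : ℂ))).arg ≠ Real.pi := by
    intro h
    rw [Complex.arg_eq_pi_iff, hr] at h
    have him2 : ((qA / qB) ^ 2).im = 2 * ((qA / qB).re * (qA / qB).im) := by
      rw [sq, Complex.mul_im]; ring
    have hre2 : ((qA / qB) ^ 2).re = (qA / qB).re ^ 2 - (qA / qB).im ^ 2 := by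
      rw [sq, Complex.mul_re]; ring
    have h4 : (qA / qB).im = 0 := by
      have h6 := h.2
      rw [him2] at h6
      have h7 : (qA / qB).re * (qA / qB).im = 0 := by linarith only [h6]
      rcases mul_eq_zero.1 h7 with h5 | h5
      · exact absurd h5 hvre.ne'
      · exact h5
    have h5 := h.1
    rw [hre2, h4] at h5
    have h8 : (0:ℝ) < (qA / qB).re ^ 2 := pow_pos hvre 2
    have h9 : (0:ℝ) ^ 2 = (0:ℝ) := by norm_num
    rw [h9] at h5
    linarith only [h5, h8]
  have hW : funW (focF t) z₀ = q + q⁻¹ := by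
    rw [funW, hq_def]
    congr 1
    rw [show (z₀ - ((focF t : ℝ) : ℂ)) / (z₀ + ((focF t : ℝ) : ℂ)) =
      ((z₀ + ((focF t : ℝ) : ℂ)) / (z₀ - ((focF t : ℝ) : ℂ)))⁻¹ from (inv_div _ _).symm,
      Complex.inv_cpow _ _ harg]
  have hqAabs : 0 < ‖qA‖ := by
    rw [norm_pos_iff]; exact hqA0
  have hqBabs : 0 < ‖qB‖ := by
    rw [norm_pos_iff]; exact hqB0
  have habsAB : ‖qA‖ * ‖qB‖ = Dr := by
    apply sq_eq_of_nonneg (by positivity) hDr0.le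
    rw [mul_pow, Complex.sq_norm, Complex.sq_norm, hnAr, hnBr, hDr2, hcos2]
    linear_combination (-4 * Real.cos φ ^ 2) * hs2
  have he2abs : ‖e2‖ = 1 := by
    rw [he2_def, Complex.norm_exp]
    simp [Complex.mul_re]
  have hsum : qA / qB + 1 = 2 * e2 / qB := by
    rw [div_add_one hqB0]; congr 1; rw [hqA_def, hqB_def]; ring
  have hWval : funW (focF t) z₀ = (qA / qB + 1) * q⁻¹ := by
    rw [hW, ← hq2]
    field_simp
  have habsq : ‖q‖ ^ 2 = ‖qA‖ / ‖qB‖ := by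
    rw [← norm_pow, hq2, norm_div]
  have habsW : ‖funW (focF t) z₀‖ ^ 2 = 4 / Dr := by
    have ha := hqAabs.ne'
    have hb := hqBabs.ne'
    rw [hWval, norm_mul, norm_inv, mul_pow, inv_pow, habsq, hsum, norm_div, norm_mul,
      he2abs, ← habsAB]
    rw [Complex.norm_ofNat]
    field_simp
    ring
  -- values of gPlus, gMinus
  have hgP : gPlus t z₀ = -(2 * (1 - t) * Real.cos φ) / Dr := by
    rw [gPlus, hUre, habsW, ← hs_def]
    field_simp
    ring
  have hgM : gMinus t z₀ = 2 * (1 + t) * Real.sin φ / Dr := by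
    rw [gMinus, hUim, habsW, ← hs_def]
    field_simp
    ring
  -- final values of gW, gZ
  have hgW : gW t z₀ = -((E - (t : ℂ) * E') / ((Dr : ℝ) : ℂ)) := by
    rw [gW, hgP, hgM, hE, hE']
    push_cast
    field_simp
    ring
  have hgZ : gZ t z₀ = -((E' - (t : ℂ) * E) / ((Dr : ℝ) : ℂ)) := by
    rw [gZ, hgP, hgM, hE, hE']
    push_cast
    field_simp
    ring
  -- modulus facts
  have habsE : ‖E - (t : ℂ) * E'‖ = Dr := by
    apply sq_eq_of_nonneg (by positivity) hDr0.le
    have h1 : E - (t : ℂ) * E' = (((1 - t) * Real.cos φ : ℝ) : ℂ) +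
        (((1 + t) * Real.sin φ : ℝ) : ℂ) * Complex.I := by
      rw [hE, hE']; push_cast; ring
    rw [Complex.sq_norm, h1, Complex.normSq_add_mul_I, hDr2, hcos2]
    linear_combination (1 + t) ^ 2 * hsin2
  have hcE : (starRingEnd ℂ) E = E' := by
    rw [hE_def, hE'_def, ← Complex.exp_conj]
    congr 1
    rw [map_mul, Complex.conj_I, Complex.conj_ofReal]
    ring
  have hcE' : (starRingEnd ℂ) E' = E := by
    rw [hE_def, hE'_def, ← Complex.exp_conj]
    congr 1
    rw [map_neg, map_mul, Complex.conj_I, Complex.conj_ofReal]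
    ring
  have hconj : (starRingEnd ℂ) (E - (t : ℂ) * E') = E' - (t : ℂ) * E := by
    rw [map_sub, map_mul, Complex.conj_ofReal, hcE, hcE']
  have habsE' : ‖E' - (t : ℂ) * E‖ = Dr := by
    rw [← hconj, Complex.norm_conj, habsE]
  have hEmtE0 : E - (t : ℂ) * E' ≠ 0 := fun h => hDr0.ne' (by rw [← habsE, h, norm_zero])
  have h2v : 2 * hTwo t z₀ = ((t : ℂ) * E - E') / (E - (t : ℂ) * E') := by
    rw [hTwo, hUval, hT, hSalt, hFc]
    field_simp
    linear_combination (-E') * huc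
  have h2abs : ‖2 * hTwo t z₀‖ = 1 := by
    rw [h2v, norm_div]
    have hnum : (t : ℂ) * E - E' = -((starRingEnd ℂ) (E - (t : ℂ) * E')) := by
      rw [hconj]; ring
    rw [hnum, norm_neg, Complex.norm_conj, habsE]
    exact div_self hDr0.ne'
  have hDrabs : ‖((Dr : ℝ) : ℂ)‖ = Dr := by
    rw [Complex.norm_real, Real.norm_of_nonneg hDr0.le]
  have hgWabs : ‖gW t z₀‖ = 1 := by
    rw [hgW, norm_neg, norm_div, habsE, hDrabs]
    exact div_self hDr0.ne'
  have hgZabs : ‖gZ t z₀‖ = 1 := by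
    rw [hgZ, norm_neg, norm_div, habsE', hDrabs]
    exact div_self hDr0.ne'
  exact ⟨h2abs, hgWabs, hgZabs, hgW, hgZ⟩
end

section
/- Let 0 < δ < 1. Then the density of eigenvalues at the origin converges to 1/π uniformly in t: for every ε > 0 there exists N ∈ ℕ such that for all n ≥ N and all t ∈ ℂ with 0 < |t| ≤ 1 − δ (and any σ with σ² = conj(t)), | (1/n)·Σ_{m=0}^{n−1} |p_m(0)|² − 1/π | < ε. (Note V(0) = 0, so (1/n)·Σ_{m=0}^{n−1} |p_m(0)|² is the density ρ_n(0).) -/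
/-- The orthonormal polynomials for the Gaussian potential:
`p_m(z) = He_m(z·√(n(1−|t|²))/σ)·σ^m·√((n/π)·√(1−|t|²))/√(m!)` with `σ² = conj t`. -/
noncomputable def opoly (n : ℕ) (t σ : ℂ) (m : ℕ) (z : ℂ) : ℂ :=
  hermiteC m (z * (Real.sqrt ((n : ℝ) * (1 - ‖t‖ ^ 2)) : ℂ) / σ) * σ ^ m *
    (Real.sqrt (((n : ℝ) / Real.pi) * Real.sqrt (1 - ‖t‖ ^ 2)) : ℂ) /
    (Real.sqrt (Nat.factorial m) : ℂ)

open Finset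
open scoped Nat

noncomputable def cB (k : ℕ) : ℝ := (Nat.centralBinom k : ℝ) / 4 ^ k

lemma cB_zero : cB 0 = 1 := by simp [cB, Nat.centralBinom_zero]

lemma cB_pos (k : ℕ) : 0 < cB k :=
  div_pos (by exact_mod_cast Nat.centralBinom_pos k) (by positivity)

lemma cB_rec (k : ℕ) : ((k : ℝ) + 1) * cB (k + 1) = ((k : ℝ) + 1 / 2) * cB k := by
  have h := Nat.succ_mul_centralBinom_succ k
  have h' : ((k + 1) * Nat.centralBinom (k + 1) : ℝ) = 2 * (2 * k + 1) * Nat.centralBinom k := by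
    exact_mod_cast congrArg (Nat.cast : ℕ → ℝ) h
  simp only [cB]
  rw [pow_succ]
  push_cast at h' ⊢
  rw [mul_div_assoc', h']
  field_simp
  ring

lemma cB_le_one (k : ℕ) : cB k ≤ 1 := by
  induction k with
  | zero => simp [cB_zero]
  | succ n ih =>
    have h := cB_rec n
    have hn : (0 : ℝ) < (n : ℝ) + 1 := by positivity
    have : cB (n + 1) = ((n : ℝ) + 1 / 2) / ((n : ℝ) + 1) * cB n := by
      field_simp
      linarith [h]
    rw [this]
    have h1 : ((n : ℝ) + 1 / 2) / ((n : ℝ) + 1) ≤ 1 := by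
      rw [div_le_one hn]; linarith
    have := (cB_pos n).le
    nlinarith

lemma dsum : ∀ n : ℕ, ∑ p ∈ Finset.HasAntidiagonal.antidiagonal n, cB p.1 * cB p.2 = 1 := by
  intro n
  induction n with
  | zero => simp [cB_zero]
  | succ n ih =>
    -- A m := ∑ p in antidiagonal m, p.1 * cB p.1 * cB p.2
    set A : ℕ → ℝ := fun m => ∑ p ∈ Finset.HasAntidiagonal.antidiagonal m, (p.1 : ℝ) * (cB p.1 * cB p.2) with hA
    have swap : ∀ m : ℕ, ∑ p ∈ Finset.HasAntidiagonal.antidiagonal m, (p.2 : ℝ) * (cB p.1 * cB p.2) = A m := by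
      intro m
      simp only [hA]
      rw [← Finset.HasAntidiagonal.map_swap_antidiagonal (n := m), Finset.sum_map]
      simp [mul_comm]
    have key : ∀ m : ℕ, 2 * A m = (m : ℝ) * ∑ p ∈ Finset.HasAntidiagonal.antidiagonal m, cB p.1 * cB p.2 := by
      intro m
      have : ∀ p ∈ Finset.HasAntidiagonal.antidiagonal m, (p.1 : ℝ) * (cB p.1 * cB p.2) + (p.2 : ℝ) * (cB p.1 * cB p.2) = (m : ℝ) * (cB p.1 * cB p.2) := by
        intro p hp
        rw [Finset.HasAntidiagonal.mem_antidiagonal] at hp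
        have : ((p.1 : ℝ) + p.2) = (m : ℝ) := by exact_mod_cast congrArg (Nat.cast : ℕ → ℝ) hp
        linear_combination (cB p.1 * cB p.2) * this
      rw [two_mul]
      nth_rewrite 2 [← swap m]
      rw [← Finset.sum_add_distrib, Finset.mul_sum]
      exact Finset.sum_congr rfl this
    have shift : A (n + 1) = A n + (1 / 2) * ∑ p ∈ Finset.HasAntidiagonal.antidiagonal n, cB p.1 * cB p.2 := by
      simp only [hA]
      rw [Finset.Nat.antidiagonal_succ, Finset.sum_cons, Finset.sum_map]
      simp only [Function.Embedding.prodMap, Function.Embedding.coeFn_mk, Prod.map, Function.Embedding.refl_apply]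
      push_cast
      rw [Finset.mul_sum, ← Finset.sum_add_distrib]
      rw [zero_mul, zero_add]
      apply Finset.sum_congr rfl
      intro p hp
      have h := cB_rec p.1
      simp only [Nat.succ_eq_add_one]
      linear_combination cB p.2 * h
    have h2 : 2 * A (n + 1) = ((n : ℝ) + 1) * ∑ p ∈ Finset.HasAntidiagonal.antidiagonal (n + 1), cB p.1 * cB p.2 := by
      have := key (n + 1); push_cast at this; exact this
    have h3 : 2 * A n = (n : ℝ) * 1 := by rw [key n, ih]
    have hn : (0 : ℝ) < (n : ℝ) + 1 := by positivity
    have : ((n : ℝ) + 1) * ∑ p ∈ Finset.HasAntidiagonal.antidiagonal (n + 1), cB p.1 * cB p.2 = ((n : ℝ) + 1) * 1 := by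
      rw [← h2, shift, ih]; linarith
    exact mul_left_cancel₀ (ne_of_gt hn) this

lemma summable_cB {x : ℝ} (hx0 : 0 ≤ x) (hx1 : x < 1) : Summable (fun k => cB k * x ^ k) := by
  apply Summable.of_nonneg_of_le (fun k => mul_nonneg (cB_pos _).le (pow_nonneg hx0 _))
    (fun k => by
      have := cB_le_one k
      have hp : (0:ℝ) ≤ x ^ k := by positivity
      nlinarith)
    (summable_geometric_of_lt_one hx0 hx1)

lemma tsum_cB {x : ℝ} (hx0 : 0 ≤ x) (hx1 : x < 1) :
    ∑' k, cB k * x ^ k = (Real.sqrt (1 - x))⁻¹ := by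
  set L := ∑' k, cB k * x ^ k with hL
  have hs := summable_cB hx0 hx1
  have hnorm : Summable (fun k => ‖cB k * x ^ k‖) := by
    simpa [Real.norm_eq_abs, abs_of_nonneg, (cB_pos _).le, hx0,
      abs_of_nonneg (mul_nonneg (cB_pos _).le (pow_nonneg hx0 _))] using hs
  have hsq : L * L = (1 - x)⁻¹ := by
    rw [hL, tsum_mul_tsum_eq_tsum_sum_antidiagonal_of_summable_norm hnorm hnorm]
    have : ∀ n : ℕ, ∑ p ∈ Finset.HasAntidiagonal.antidiagonal n, (cB p.1 * x ^ p.1) * (cB p.2 * x ^ p.2)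
        = x ^ n := by
      intro n
      have : ∀ p ∈ Finset.HasAntidiagonal.antidiagonal n, (cB p.1 * x ^ p.1) * (cB p.2 * x ^ p.2)
          = x ^ n * (cB p.1 * cB p.2) := by
        intro p hp
        rw [Finset.HasAntidiagonal.mem_antidiagonal] at hp
        rw [← hp, pow_add]; ring
      rw [Finset.sum_congr rfl this, ← Finset.mul_sum, dsum, mul_one]
    simp only [this]
    exact tsum_geometric_of_lt_one hx0 hx1
  have hL0 : 0 ≤ L := tsum_nonneg (fun k => mul_nonneg (cB_pos _).le (pow_nonneg hx0 _))
  have h1x : 0 < 1 - x := by linarith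
  calc L = Real.sqrt (L * L) := (Real.sqrt_mul_self hL0).symm
    _ = (Real.sqrt (1 - x))⁻¹ := by rw [hsq, Real.sqrt_inv]

open scoped Nat in
lemma doubleFact_fact (k : ℕ) : (2*k).factorial = (2*k)‼ * (2*k-1)‼ := by
  cases k with
  | zero => rfl
  | succ k =>
    have h : 2*(k+1) = (2*k+1) + 1 := by ring
    rw [h, Nat.factorial_eq_mul_doubleFactorial]
    congr 1

open scoped Nat in
lemma doubleFact_key (k : ℕ) :
    Nat.centralBinom k * (2*k).factorial = 4^k * ((2*k-1)‼)^2 := by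
  have h1 := doubleFact_fact k
  have h2 := Nat.doubleFactorial_two_mul k
  have h3 : Nat.centralBinom k * k.factorial * k.factorial = (2*k).factorial := by
    rw [Nat.centralBinom_eq_two_mul_choose]
    have := Nat.choose_mul_factorial_mul_factorial (Nat.le_mul_of_pos_left k (by norm_num) : k ≤ 2*k)
    rw [show 2*k - k = k by omega] at this
    exact this
  have hck : Nat.centralBinom k * k.factorial = 2^k * (2*k-1)‼ := by
    apply Nat.eq_of_mul_eq_mul_right k.factorial_pos
    rw [h3, h1, h2]; ring
  calc Nat.centralBinom k * (2*k).factorial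
      = (Nat.centralBinom k * k.factorial) * (2^k * (2*k-1)‼) := by rw [h1, h2]; ring
    _ = (2^k * (2*k-1)‼) * (2^k * (2*k-1)‼) := by rw [hck]
    _ = 4^k * ((2*k-1)‼)^2 := by rw [show (4:ℕ) = 2*2 by norm_num, mul_pow]; ring

open scoped Nat in
lemma cB_eq_dfac (k : ℕ) :
    ((((2*k-1)‼ : ℕ) : ℝ))^2 / ((2*k).factorial : ℝ) = cB k := by
  have h : ((Nat.centralBinom k : ℝ)) * ((2*k).factorial : ℝ)
      = 4^k * (((2*k-1)‼ : ℕ) : ℝ)^2 := by exact_mod_cast doubleFact_key k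
  have f0 : (0:ℝ) < ((2*k).factorial : ℝ) := by exact_mod_cast (2*k).factorial_pos
  rw [cB]
  rw [div_eq_div_iff f0.ne' (by positivity)]
  linarith [h]

lemma hermiteC_zero (m : ℕ) : hermiteC m 0 = (((Polynomial.hermite m).coeff 0 : ℤ) : ℂ) := by
  simp [hermiteC, Polynomial.aeval_def, Polynomial.eval₂_at_zero]

lemma opoly_abs_sq (n : ℕ) (t σ : ℂ) (hσ : σ ^ 2 = (starRingEnd ℂ) t) (m : ℕ) :
    ‖opoly n t σ m 0‖ ^ 2 =
      ((n : ℝ) / Real.pi * Real.sqrt (1 - ‖t‖ ^ 2)) *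
        ((((Polynomial.hermite m).coeff 0 : ℤ) : ℝ) ^ 2 * ‖t‖ ^ m / m.factorial) := by
  have hσ2 : ‖σ‖ ^ 2 = ‖t‖ := by
    rw [← norm_pow, hσ, Complex.norm_conj]
  have h1 : opoly n t σ m 0 = (((Polynomial.hermite m).coeff 0 : ℤ) : ℂ) * σ ^ m *
      (Real.sqrt (((n : ℝ) / Real.pi) * Real.sqrt (1 - ‖t‖ ^ 2)) : ℂ) /
      (Real.sqrt m.factorial : ℂ) := by
    simp only [opoly, zero_mul, zero_div, hermiteC_zero]
  rw [h1, norm_div, norm_mul, norm_mul, norm_pow, Complex.norm_intCast, Complex.norm_real,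
    Complex.norm_real, Real.norm_eq_abs, Real.norm_eq_abs, abs_of_nonneg (Real.sqrt_nonneg _), abs_of_nonneg (Real.sqrt_nonneg _),
    div_pow, mul_pow, mul_pow, ← pow_mul, mul_comm m 2, pow_mul, hσ2,
    Real.sq_sqrt (by positivity), Real.sq_sqrt (Nat.cast_nonneg _), sq_abs]
  ring

lemma sum_b_even (b : ℕ → ℝ) (hb : ∀ k, b (2*k+1) = 0) (K : ℕ) :
    ∑ m ∈ Finset.range (2*K), b m = ∑ k ∈ Finset.range K, b (2*k) := by
  induction K with
  | zero => simp
  | succ K ih =>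
    rw [show 2*(K+1) = (2*K + 1) + 1 by ring, Finset.sum_range_succ, Finset.sum_range_succ,
      ih, hb, add_zero, Finset.sum_range_succ]

lemma tail_bound {x : ℝ} (hx0 : 0 ≤ x) (hx1 : x < 1) (K : ℕ) :
    (∑' k, cB k * x^k) - ∑ k ∈ Finset.range K, cB k * x^k ≤ x^K * (1-x)⁻¹ := by
  have hsummable := summable_cB hx0 hx1
  have hsplit := hsummable.sum_add_tsum_nat_add K
  have h1 : (∑' k, cB k * x^k) - ∑ k ∈ Finset.range K, cB k * x^k
      = ∑' i, cB (i+K) * x^(i+K) := by linarith [hsplit]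
  have hsg : Summable (fun i : ℕ => x^(i+K)) := by
    simp_rw [pow_add]
    exact (summable_geometric_of_lt_one hx0 hx1).mul_right _
  have hs1 : Summable (fun i : ℕ => cB (i+K) * x^(i+K)) := (summable_nat_add_iff K).2 hsummable
  have h2 : ∑' i, cB (i+K) * x^(i+K) ≤ ∑' i : ℕ, x^(i+K) := by
    refine Summable.tsum_le_tsum (fun i => ?_) hs1 hsg
    nlinarith [cB_le_one (i+K), pow_nonneg hx0 (i+K), (cB_pos (i+K)).le]
  have h3 : ∑' i : ℕ, x^(i+K) = x^K * (1-x)⁻¹ := by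
    simp_rw [pow_add, mul_comm (x ^ _) (x ^ K)]
    rw [tsum_mul_left, tsum_geometric_of_lt_one hx0 hx1]
  linarith


set_option maxHeartbeats 1000000 in
/-- the density of eigenvalues at the origin,
`ρ_n(0) = (1/n)·Σ_{m=0}^{n−1} |p_m(0)|²` (note `V(0) = 0`), converges to `1/π`
uniformly in `t` for `0 < |t| ≤ 1 − δ`. -/
theorem stmt14 (δ : ℝ) (hδ0 : 0 < δ) (hδ1 : δ < 1) :
    ∀ ε : ℝ, 0 < ε → ∃ N : ℕ, ∀ n : ℕ, N ≤ n → ∀ t σ : ℂ,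
      0 < ‖t‖ → ‖t‖ ≤ 1 - δ → σ ^ 2 = (starRingEnd ℂ) t →
      |(1 / (n : ℝ)) * ∑ m ∈ Finset.range n, ‖opoly n t σ m 0‖ ^ 2 -
          1 / Real.pi| < ε := by
  intro ε hε
  have hδ2 : (1 - δ)^2 < 1 := by nlinarith
  have hεπ : 0 < ε * Real.pi * Real.sqrt δ := by
    have := Real.pi_pos
    have := Real.sqrt_pos.2 hδ0
    positivity
  obtain ⟨K, hK⟩ := exists_pow_lt_of_lt_one hεπ hδ2
  refine ⟨2*K + 2, fun n hn t σ ht0 ht1 hσ => ?_⟩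
  have hπ := Real.pi_pos
  set r := ‖t‖ with hr
  set x := r^2 with hxdef
  have hr0 : 0 < r := ht0
  have hx1 : x < 1 := by nlinarith
  have hx0 : 0 ≤ x := sq_nonneg r
  have hδx : δ ≤ 1 - x := by nlinarith
  have hxδ : x ≤ (1 - δ)^2 := by nlinarith
  set q := Real.sqrt (1 - x) with hq
  have hq0 : 0 < q := Real.sqrt_pos.2 (by linarith)
  have hq2 : q^2 = 1 - x := Real.sq_sqrt (by linarith)
  have hqδ : Real.sqrt δ ≤ q := Real.sqrt_le_sqrt (by linarith)
  -- the even-coefficient sequence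
  set b : ℕ → ℝ :=
    fun m => (((Polynomial.hermite m).coeff 0 : ℤ) : ℝ)^2 * r^m / m.factorial with hb
  have hbnn : ∀ m, 0 ≤ b m := fun m => by
    have : (0:ℝ) < m.factorial := by exact_mod_cast m.factorial_pos
    positivity
  have hbodd : ∀ k, b (2*k+1) = 0 := by
    intro k
    have h0 : ((Polynomial.hermite (2*k+1)).coeff 0) = 0 :=
      Polynomial.coeff_hermite_of_odd_add (by simpa using odd_two_mul_add_one k)
    simp only [hb]
    rw [h0]
    norm_num
  have hbeven : ∀ k, b (2*k) = cB k * x^k := by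
    intro k
    have hco := Polynomial.coeff_hermite_explicit k 0
    rw [Nat.add_zero] at hco
    have hkey : b (2*k) = ((((2*k-1)‼ : ℕ) : ℝ))^2 / ((2*k).factorial : ℝ) * x^k := by
      simp only [hb]
      rw [hco, Nat.choose_zero_right]
      push_cast
      have hr2 : r^(2*k) = x^k := by rw [pow_mul, ← hxdef]
      rw [hr2, mul_one, mul_pow, ← pow_mul, mul_comm k 2, pow_mul, neg_one_sq, one_pow, one_mul]
      ring
    rw [hkey, cB_eq_dfac]
  -- sum identity for the density
  have habs : ∀ m, ‖opoly n t σ m 0‖ ^ 2 = ((n : ℝ)/Real.pi * q) * b m := by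
    intro m
    rw [opoly_abs_sq n t σ hσ m, ← hr, ← hxdef, ← hq, hb]
  have hn0 : (0:ℝ) < n := by
    have : 0 < n := by omega
    exact_mod_cast this
  have hsum : (1 / (n : ℝ)) * ∑ m ∈ Finset.range n, ‖opoly n t σ m 0‖ ^ 2
      = (q / Real.pi) * ∑ m ∈ Finset.range n, b m := by
    rw [Finset.sum_congr rfl (fun m _ => habs m), ← Finset.mul_sum]
    field_simp
  set S := ∑ m ∈ Finset.range n, b m with hS
  set L := ∑' k, cB k * x^k with hL
  have hLval : L = q⁻¹ := by rw [hL, tsum_cB hx0 hx1, hq]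
  have hsummable := summable_cB hx0 hx1
  -- S ≤ L
  have hSle : S ≤ L := by
    calc S ≤ ∑ m ∈ Finset.range (2*n), b m :=
          Finset.sum_le_sum_of_subset_of_nonneg
            (Finset.range_subset_range.2 (by omega)) (fun m _ _ => hbnn m)
      _ = ∑ k ∈ Finset.range n, b (2*k) := sum_b_even b hbodd n
      _ = ∑ k ∈ Finset.range n, cB k * x^k := Finset.sum_congr rfl (fun k _ => hbeven k)
      _ ≤ L := Summable.sum_le_tsum _ (fun k _ => mul_nonneg (cB_pos k).le (pow_nonneg hx0 k)) hsummable
  -- S ≥ partial sum up to K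
  have hSge : ∑ k ∈ Finset.range K, cB k * x^k ≤ S := by
    calc ∑ k ∈ Finset.range K, cB k * x^k
        = ∑ k ∈ Finset.range K, b (2*k) := (Finset.sum_congr rfl (fun k _ => hbeven k)).symm
      _ = ∑ m ∈ Finset.range (2*K), b m := (sum_b_even b hbodd K).symm
      _ ≤ S := Finset.sum_le_sum_of_subset_of_nonneg
          (Finset.range_subset_range.2 (by omega)) (fun m _ _ => hbnn m)
  -- tail bound
  have htail : L - ∑ k ∈ Finset.range K, cB k * x^k ≤ x^K * (1-x)⁻¹ := by
    have h := tail_bound hx0 hx1 K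
    rw [← hL] at h
    exact h
  -- assemble
  rw [hsum]
  have hone : 1 / Real.pi = (q / Real.pi) * L := by
    rw [hLval]; field_simp
  rw [hone]
  rw [abs_of_nonpos (sub_nonpos.2 (mul_le_mul_of_nonneg_left hSle (div_nonneg hq0.le hπ.le)))]
  have key : (q / Real.pi) * L - (q / Real.pi) * S ≤ (q / Real.pi) * (x^K * (1-x)⁻¹) := by
    have hd : L - S ≤ x^K * (1-x)⁻¹ := by linarith [hSge, htail]
    have hqp : (0:ℝ) ≤ q / Real.pi := div_nonneg hq0.le hπ.le
    calc (q / Real.pi) * L - (q / Real.pi) * S = (q / Real.pi) * (L - S) := by ring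
      _ ≤ (q / Real.pi) * (x^K * (1-x)⁻¹) := mul_le_mul_of_nonneg_left hd hqp
  have hfin : (q / Real.pi) * (x^K * (1-x)⁻¹) < ε := by
    have h1x : (0:ℝ) < 1 - x := by linarith
    have e1 : (q / Real.pi) * (x^K * (1-x)⁻¹) = x^K / (Real.pi * q) := by
      rw [← hq2]; field_simp
    rw [e1]
    have e2 : x^K ≤ ((1-δ)^2)^K := pow_le_pow_left₀ hx0 hxδ K
    have e3 : ((1-δ)^2)^K < ε * Real.pi * Real.sqrt δ := hK
    have e4 : Real.pi * Real.sqrt δ ≤ Real.pi * q := by nlinarith [hqδ, hπ]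
    have e5 : 0 < Real.pi * Real.sqrt δ := by
      have := Real.sqrt_pos.2 hδ0; positivity
    rw [div_lt_iff₀ (by nlinarith [hq0, hπ])]
    calc x^K ≤ ((1-δ)^2)^K := e2
      _ < ε * Real.pi * Real.sqrt δ := e3
      _ ≤ ε * (Real.pi * q) := by nlinarith [e4, hε]
  linarith [key, hfin, neg_sub ((q / Real.pi) * S) ((q / Real.pi) * L)]
end
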